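/- arXiv:2301.02054 — 18 statements merged into one kernel-verified Lean document; each statement's English description precedes it below -/
import Mathlib

section
/- Let u be a solution of the difference equation a(n)u_{n+1} = b(n)u_n − c(n)u_{n−1} for n ≥ 1, where a(n), b(n), c(n) > 0 for all integers n ≥ 1. Define the infinite matrix M₀ : ℕ × ℕ → ℝ by M₀(0,0) = u_1, M₀(0,1) = c(1), M₀(1,0) = u_0, M₀(1,1) = b(1), M₀(1,2) = c(2), and for i ≥ 2: M₀(i,i−1) = a(i−1), M₀(i,i) = b(i), M₀(i,i+1) = c(i+1), with all other entries zero. Then u_n > 0 for all n ≥ 0 if and only if u_0 > 0 and M₀ is totally nonnegative. -/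
set_option maxHeartbeats 1000000

/-- An infinite real matrix `M : ℕ → ℕ → ℝ` is totally nonnegative if every
minor (of every order `k ≥ 1`, with strictly increasing row and column
selections) is nonnegative. -/
def IsTotallyNonneg (M : ℕ → ℕ → ℝ) : Prop :=
  ∀ (k : ℕ) (r s : Fin (k + 1) → ℕ), StrictMono r → StrictMono s →
    0 ≤ (Matrix.of fun i j => M (r i) (s j)).det

open Matrix

lemma det_split {n t m : ℕ} (hnm : n = t + m) (A : Matrix (Fin n) (Fin n) ℝ)
    (h : (∀ i j : Fin n, (i : ℕ) < t → t ≤ (j : ℕ) → A i j = 0) ∨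
         (∀ i j : Fin n, (j : ℕ) < t → t ≤ (i : ℕ) → A i j = 0)) :
    A.det = (Matrix.of fun i j : Fin t => A ⟨i, by have := i.isLt; omega⟩ ⟨j, by have := j.isLt; omega⟩).det *
            (Matrix.of fun i j : Fin m => A ⟨t + i, by have := i.isLt; omega⟩ ⟨t + j, by have := j.isLt; omega⟩).det := by
  subst hnm
  have key : A.det = (A.submatrix finSumFinEquiv finSumFinEquiv).det :=
    (Matrix.det_submatrix_equiv_self _ _).symm
  set B := A.submatrix finSumFinEquiv finSumFinEquiv with hB
  have h11 : B.toBlocks₁₁ = Matrix.of fun i j : Fin t =>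
      A ⟨i, by have := i.isLt; omega⟩ ⟨j, by have := j.isLt; omega⟩ := by
    ext i j
    simp only [Matrix.toBlocks₁₁, hB, Matrix.submatrix_apply, Matrix.of_apply,
      finSumFinEquiv_apply_left]
    congr 1 <;> exact Fin.ext (by simp)
  have h22 : B.toBlocks₂₂ = Matrix.of fun i j : Fin m =>
      A ⟨t + i, by have := i.isLt; omega⟩ ⟨t + j, by have := j.isLt; omega⟩ := by
    ext i j
    simp only [Matrix.toBlocks₂₂, hB, Matrix.submatrix_apply, Matrix.of_apply,
      finSumFinEquiv_apply_right]
    congr 1 <;> exact Fin.ext (by simp [Fin.natAdd])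
  rw [key, ← Matrix.fromBlocks_toBlocks B, ← h11, ← h22]
  rcases h with h | h
  · have h12 : B.toBlocks₁₂ = 0 := by
      ext i j
      simp only [Matrix.toBlocks₁₂, hB, Matrix.submatrix_apply, Matrix.of_apply,
        finSumFinEquiv_apply_left, finSumFinEquiv_apply_right, Matrix.zero_apply]
      exact h _ _ (by simp) (by simp [Fin.natAdd])
    rw [h12, Matrix.det_fromBlocks_zero₁₂]
  · have h21 : B.toBlocks₂₁ = 0 := by
      ext i j
      simp only [Matrix.toBlocks₂₁, hB, Matrix.submatrix_apply, Matrix.of_apply,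
        finSumFinEquiv_apply_left, finSumFinEquiv_apply_right, Matrix.zero_apply]
      exact h _ _ (by simp) (by simp [Fin.natAdd])
    rw [h21, Matrix.det_fromBlocks_zero₂₁]


lemma smono_le {k : ℕ} {r : Fin (k + 1) → ℕ} (hr : StrictMono r) (i : Fin (k + 1)) :
    r 0 + (i : ℕ) ≤ r i := by
  induction i using Fin.induction with
  | zero => simp
  | succ i ih =>
    have h1 := hr (Fin.castSucc_lt_succ : i.castSucc < i.succ)
    have h2 : ((i.castSucc : Fin (k + 1)) : ℕ) = (i : ℕ) := rfl
    have h3 : ((i.succ : Fin (k + 1)) : ℕ) = (i : ℕ) + 1 := rfl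
    omega

lemma shift_mono {k m d : ℕ} {r : Fin (k + 1) → ℕ} (hr : StrictMono r)
    (h : ∀ i : Fin (m + 1), d + (i : ℕ) < k + 1) :
    StrictMono (fun i : Fin (m + 1) => r ⟨d + (i : ℕ), h i⟩) := by
  intro x y hxy
  apply hr
  rw [Fin.mk_lt_mk]
  have := (Fin.lt_def).mp hxy
  omega

lemma restr_mono {k m : ℕ} {r : Fin (k + 1) → ℕ} (hr : StrictMono r)
    (h : ∀ i : Fin (m + 1), (i : ℕ) < k + 1) :
    StrictMono (fun i : Fin (m + 1) => r ⟨(i : ℕ), h i⟩) := by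
  intro x y hxy
  apply hr
  rw [Fin.mk_lt_mk]
  exact (Fin.lt_def).mp hxy

lemma tridiag_tn (N : ℕ → ℕ → ℝ)
    (hlow : ∀ i j, j + 2 ≤ i → N i j = 0) (hup : ∀ i j, i + 2 ≤ j → N i j = 0)
    (hnn : ∀ i j, 0 ≤ N i j)
    (hE : ∀ p n, 0 < (Matrix.of fun i j : Fin n => N (p + (i : ℕ)) (p + (j : ℕ))).det) :
    ∀ (k : ℕ) (r s : Fin (k + 1) → ℕ), StrictMono r → StrictMono s →
      0 ≤ (Matrix.of fun i j => N (r i) (s j)).det := by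
  intro k
  induction k using Nat.strong_induction_on with
  | _ k IH =>
  rcases k with _ | k₀
  · intro r s _ _
    rw [Matrix.det_fin_one]
    exact hnn _ _
  intro r s hr hs
  have hrm : ∀ i : Fin (k₀ + 2), r 0 + (i : ℕ) ≤ r i := smono_le hr
  have hsm : ∀ i : Fin (k₀ + 2), s 0 + (i : ℕ) ≤ s i := smono_le hs
  rcases (show s 0 + 2 ≤ r 0 ∨ r 0 + 2 ≤ s 0 ∨ s 0 + 1 = r 0 ∨ r 0 + 1 = s 0 ∨ r 0 = s 0
      by omega) with hc1 | hc1 | hc1 | hc1 | hc1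
  · refine le_of_eq (Matrix.det_eq_zero_of_column_eq_zero 0 fun i => ?_).symm
    have := hrm i
    exact hlow _ _ (by omega)
  · refine le_of_eq (Matrix.det_eq_zero_of_row_eq_zero 0 fun j => ?_).symm
    have := hsm j
    exact hup _ _ (by omega)
  · -- s 0 + 1 = r 0 : lower-left zero with split t = 1
    have hz : ∀ i j : Fin (k₀ + 2), (j : ℕ) < 1 → 1 ≤ (i : ℕ) →
        (Matrix.of fun i j => N (r i) (s j)) i j = 0 := by
      intro i j hj hi
      have hj0 : j = 0 := Fin.ext (by simp only [Fin.val_zero]; omega)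
      subst hj0
      have := hrm i
      exact hlow _ _ (by omega)
    rw [det_split (show k₀ + 2 = 1 + (k₀ + 1) by omega) _ (Or.inr hz)]
    apply mul_nonneg
    · rw [Matrix.det_fin_one]
      exact hnn _ _
    · exact IH k₀ (by omega) (fun i => r ⟨1 + (i : ℕ), by have := i.isLt; omega⟩)
        (fun i => s ⟨1 + (i : ℕ), by have := i.isLt; omega⟩)
        (shift_mono hr (fun i => by have := i.isLt; omega)) (shift_mono hs (fun i => by have := i.isLt; omega))
  · -- r 0 + 1 = s 0 : upper-right zero with split t = 1
    have hz : ∀ i j : Fin (k₀ + 2), (i : ℕ) < 1 → 1 ≤ (j : ℕ) →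
        (Matrix.of fun i j => N (r i) (s j)) i j = 0 := by
      intro i j hi hj
      have hi0 : i = 0 := Fin.ext (by simp only [Fin.val_zero]; omega)
      subst hi0
      have := hsm j
      exact hup _ _ (by omega)
    rw [det_split (show k₀ + 2 = 1 + (k₀ + 1) by omega) _ (Or.inl hz)]
    apply mul_nonneg
    · rw [Matrix.det_fin_one]
      exact hnn _ _
    · exact IH k₀ (by omega) (fun i => r ⟨1 + (i : ℕ), by have := i.isLt; omega⟩)
        (fun i => s ⟨1 + (i : ℕ), by have := i.isLt; omega⟩)
        (shift_mono hr (fun i => by have := i.isLt; omega)) (shift_mono hs (fun i => by have := i.isLt; omega))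
  · -- r 0 = s 0
    classical
    set Q : ℕ → Prop := fun m => ∀ i : Fin (k₀ + 2), (i : ℕ) < m →
      r i = r 0 + (i : ℕ) ∧ s i = r 0 + (i : ℕ) with hQ
    have hQ1 : Q 1 := by
      intro i hi
      have hi0 : i = 0 := Fin.ext (by simp only [Fin.val_zero]; omega)
      subst hi0
      refine ⟨by simp, by simp [hc1]⟩
    have hgle : Nat.findGreatest Q (k₀ + 2) ≤ k₀ + 2 := Nat.findGreatest_le _
    have hgge : 1 ≤ Nat.findGreatest Q (k₀ + 2) := Nat.le_findGreatest (by omega) hQ1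
    obtain ⟨t₀, ht⟩ : ∃ t₀, Nat.findGreatest Q (k₀ + 2) = t₀ + 1 :=
      ⟨Nat.findGreatest Q (k₀ + 2) - 1, by omega⟩
    have hQt : Q (t₀ + 1) := ht ▸ Nat.findGreatest_spec (show 1 ≤ k₀ + 2 by omega) hQ1
    rw [ht] at hgle
    by_cases hfull : t₀ + 1 = k₀ + 2
    · have hall : ∀ i : Fin (k₀ + 2), r i = r 0 + (i : ℕ) ∧ s i = r 0 + (i : ℕ) :=
        fun i => hQt i (by have := i.isLt; omega)
    -- whole matrix is a contiguous block
      have heq : (Matrix.of fun i j => N (r i) (s j)) =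
          Matrix.of fun i j : Fin (k₀ + 2) => N (r 0 + (i : ℕ)) (r 0 + (j : ℕ)) := by
        ext i j
        simp only [Matrix.of_apply]
        exact congrArg₂ N (hall i).1 (hall j).2
      rw [heq]
      exact (hE (r 0) (k₀ + 2)).le
    · have htk : t₀ + 1 ≤ k₀ + 1 := by omega
      have hlt : t₀ + 1 < k₀ + 2 := by omega
      have hv : ((⟨t₀ + 1, hlt⟩ : Fin (k₀ + 2)) : ℕ) = t₀ + 1 := rfl
      have hnQ : ¬ Q (t₀ + 2) := by
        have := Nat.findGreatest_is_greatest (P := Q) (n := k₀ + 2) (k := t₀ + 2)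
          (by omega) (by omega)
        exact this
      have hfail : ¬ (r ⟨t₀ + 1, hlt⟩ = r 0 + (t₀ + 1) ∧
          s ⟨t₀ + 1, hlt⟩ = r 0 + (t₀ + 1)) := by
        intro hcon
        apply hnQ
        intro i hi
        rcases Nat.lt_or_ge (i : ℕ) (t₀ + 1) with h | h
        · exact hQt i h
        · have hieq : i = ⟨t₀ + 1, hlt⟩ := Fin.ext (by rw [hv]; omega)
          rw [hieq]
          exact hcon
      have hrit : r 0 + (t₀ + 1) ≤ r ⟨t₀ + 1, hlt⟩ := by
        have := hrm ⟨t₀ + 1, hlt⟩; rw [hv] at this; exact this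
      have hsit : s 0 + (t₀ + 1) ≤ s ⟨t₀ + 1, hlt⟩ := by
        have := hsm ⟨t₀ + 1, hlt⟩; rw [hv] at this; exact this
      have hone : r 0 + (t₀ + 1) + 1 ≤ r ⟨t₀ + 1, hlt⟩ ∨
          r 0 + (t₀ + 1) + 1 ≤ s ⟨t₀ + 1, hlt⟩ := by
        by_contra hno
        push_neg at hno
        exact hfail ⟨by omega, by omega⟩
      rcases hone with hone | hone
      · -- lower-left zero block
        have hz : ∀ i j : Fin (k₀ + 2), (j : ℕ) < t₀ + 1 → t₀ + 1 ≤ (i : ℕ) →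
            (Matrix.of fun i j => N (r i) (s j)) i j = 0 := by
          intro i j hj hi
          have hsj : s j = r 0 + (j : ℕ) := (hQt j hj).2
          have hri : r ⟨t₀ + 1, hlt⟩ ≤ r i := by
            apply hr.monotone
            rw [Fin.le_def]
            exact hi
          exact hlow _ _ (by omega)
        rw [det_split (show k₀ + 2 = (t₀ + 1) + (k₀ - t₀ + 1) by omega) _ (Or.inr hz)]
        apply mul_nonneg
        · exact IH t₀ (by omega) (fun i => r ⟨(i : ℕ), by have := i.isLt; omega⟩)
            (fun i => s ⟨(i : ℕ), by have := i.isLt; omega⟩)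
            (restr_mono hr (fun i => by have := i.isLt; omega)) (restr_mono hs (fun i => by have := i.isLt; omega))
        · exact IH (k₀ - t₀) (by omega)
            (fun i => r ⟨t₀ + 1 + (i : ℕ), by have := i.isLt; omega⟩)
            (fun i => s ⟨t₀ + 1 + (i : ℕ), by have := i.isLt; omega⟩)
            (shift_mono hr (fun i => by have := i.isLt; omega)) (shift_mono hs (fun i => by have := i.isLt; omega))
      · -- upper-right zero block
        have hz : ∀ i j : Fin (k₀ + 2), (i : ℕ) < t₀ + 1 → t₀ + 1 ≤ (j : ℕ) →
            (Matrix.of fun i j => N (r i) (s j)) i j = 0 := by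
          intro i j hi hj
          have hri : r i = r 0 + (i : ℕ) := (hQt i hi).1
          have hsj : s ⟨t₀ + 1, hlt⟩ ≤ s j := by
            apply hs.monotone
            rw [Fin.le_def]
            exact hj
          exact hup _ _ (by omega)
        rw [det_split (show k₀ + 2 = (t₀ + 1) + (k₀ - t₀ + 1) by omega) _ (Or.inl hz)]
        apply mul_nonneg
        · exact IH t₀ (by omega) (fun i => r ⟨(i : ℕ), by have := i.isLt; omega⟩)
            (fun i => s ⟨(i : ℕ), by have := i.isLt; omega⟩)
            (restr_mono hr (fun i => by have := i.isLt; omega)) (restr_mono hs (fun i => by have := i.isLt; omega))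
        · exact IH (k₀ - t₀) (by omega)
            (fun i => r ⟨t₀ + 1 + (i : ℕ), by have := i.isLt; omega⟩)
            (fun i => s ⟨t₀ + 1 + (i : ℕ), by have := i.isLt; omega⟩)
            (shift_mono hr (fun i => by have := i.isLt; omega)) (shift_mono hs (fun i => by have := i.isLt; omega))


lemma blk_rec (N : ℕ → ℕ → ℝ)
    (hlow : ∀ i j, j + 2 ≤ i → N i j = 0) (hup : ∀ i j, i + 2 ≤ j → N i j = 0)
    (p n : ℕ) :
    (Matrix.of fun i j : Fin (n + 2) => N (p + i) (p + j)).det =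
      N (p + n + 1) (p + n + 1) * (Matrix.of fun i j : Fin (n + 1) => N (p + i) (p + j)).det
      - N (p + n + 1) (p + n) * N (p + n) (p + n + 1) *
        (Matrix.of fun i j : Fin n => N (p + i) (p + j)).det := by
  set A : Matrix (Fin (n + 2)) (Fin (n + 2)) ℝ :=
    Matrix.of fun i j => N (p + i) (p + j) with hA
  rw [Matrix.det_succ_row A (Fin.last (n + 1))]
  rw [Fin.sum_univ_castSucc]
  rw [Fin.sum_univ_castSucc]
  have hzero : ∀ j : Fin n,
      (-1 : ℝ) ^ ((Fin.last (n+1) : ℕ) + ((j.castSucc.castSucc : Fin (n+2)) : ℕ)) *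
        A (Fin.last (n+1)) j.castSucc.castSucc *
        (A.submatrix (Fin.last (n+1)).succAbove (j.castSucc.castSucc).succAbove).det = 0 := by
    intro j
    have : A (Fin.last (n+1)) j.castSucc.castSucc = 0 := by
      apply hlow
      simp [Fin.last]
      omega
    rw [this]; ring
  rw [Finset.sum_eq_zero (fun j _ => hzero j), zero_add]
  have hlastterm :
      (-1 : ℝ) ^ ((Fin.last (n+1) : ℕ) + ((Fin.last (n+1) : Fin (n+2)) : ℕ)) *
        A (Fin.last (n+1)) (Fin.last (n+1)) *
        (A.submatrix (Fin.last (n+1)).succAbove (Fin.last (n+1)).succAbove).det =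
      N (p + n + 1) (p + n + 1) * (Matrix.of fun i j : Fin (n + 1) => N (p + i) (p + j)).det := by
    have hsign : (-1 : ℝ) ^ ((Fin.last (n+1) : ℕ) + ((Fin.last (n+1) : Fin (n+2)) : ℕ)) = 1 := by
      simp [Fin.last, ← two_mul, pow_mul]
    rw [hsign, one_mul]
    have hsub : A.submatrix (Fin.last (n+1)).succAbove (Fin.last (n+1)).succAbove =
        Matrix.of fun i j : Fin (n + 1) => N (p + i) (p + j) := by
      ext i j
      simp [hA, Fin.succAbove_last]
    rw [hsub]
    have : A (Fin.last (n+1)) (Fin.last (n+1)) = N (p + n + 1) (p + n + 1) := by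
      simp [hA, Fin.last]; ring_nf
    rw [this]
  rw [hlastterm]
  -- middle term
  have hmid :
      (-1 : ℝ) ^ ((Fin.last (n+1) : ℕ) + (((Fin.last n).castSucc : Fin (n+2)) : ℕ)) *
        A (Fin.last (n+1)) (Fin.last n).castSucc *
        (A.submatrix (Fin.last (n+1)).succAbove ((Fin.last n).castSucc).succAbove).det =
      - (N (p + n + 1) (p + n) * N (p + n) (p + n + 1) *
        (Matrix.of fun i j : Fin n => N (p + i) (p + j)).det) := by
    have hsign : (-1 : ℝ) ^ ((Fin.last (n+1) : ℕ) + (((Fin.last n).castSucc : Fin (n+2)) : ℕ)) = -1 := by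
      have : (Fin.last (n+1) : ℕ) + (((Fin.last n).castSucc : Fin (n+2)) : ℕ) = 2 * n + 1 := by
        simp [Fin.last]; ring
      rw [this, pow_succ, pow_mul]
      norm_num
    rw [hsign]
    have hentry : A (Fin.last (n+1)) (Fin.last n).castSucc = N (p + n + 1) (p + n) := by
      simp [hA, Fin.last]; ring_nf
    rw [hentry]
    set C : Matrix (Fin (n+1)) (Fin (n+1)) ℝ :=
      A.submatrix (Fin.last (n+1)).succAbove ((Fin.last n).castSucc).succAbove with hC
    -- expand C along its last column
    have hCdet : C.det = N (p + n) (p + n + 1) *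
        (Matrix.of fun i j : Fin n => N (p + i) (p + j)).det := by
      rw [Matrix.det_succ_column C (Fin.last n)]
      rw [Fin.sum_univ_castSucc]
      have hz : ∀ i : Fin n,
          (-1 : ℝ) ^ (((i.castSucc : Fin (n+1)) : ℕ) + ((Fin.last n : Fin (n+1)) : ℕ)) *
            C i.castSucc (Fin.last n) *
            (C.submatrix (i.castSucc).succAbove (Fin.last n).succAbove).det = 0 := by
        intro i
        have : C i.castSucc (Fin.last n) = 0 := by
          have h1 : ((Fin.last (n+1)).succAbove i.castSucc : ℕ) = (i : ℕ) := by
            rw [Fin.succAbove_last]; simp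
          have h2 : ((((Fin.last n).castSucc : Fin (n+2)).succAbove (Fin.last n)) : ℕ) = n + 1 := by
            simp [Fin.succAbove, Fin.lt_def, Fin.last]
          simp only [hC, Matrix.submatrix_apply, hA, Matrix.of_apply]
          rw [show ((Fin.last (n+1)).succAbove i.castSucc : ℕ) = (i:ℕ) from h1,
              show ((((Fin.last n).castSucc : Fin (n+2)).succAbove (Fin.last n)) : ℕ) = n + 1 from h2]
          apply hup
          omega
        rw [this]; ring
      rw [Finset.sum_eq_zero (fun i _ => hz i), zero_add]
      have hsign2 : (-1 : ℝ) ^ (((Fin.last n : Fin (n+1)) : ℕ) + ((Fin.last n : Fin (n+1)) : ℕ)) = 1 := by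
        simp [Fin.last, ← two_mul, pow_mul]
      rw [hsign2, one_mul]
      have hCentry : C (Fin.last n) (Fin.last n) = N (p + n) (p + n + 1) := by
        have h1 : ((Fin.last (n+1)).succAbove (Fin.last n) : ℕ) = n := by
          rw [Fin.succAbove_last]; simp [Fin.last]
        have h2 : ((((Fin.last n).castSucc : Fin (n+2)).succAbove (Fin.last n)) : ℕ) = n + 1 := by
          simp [Fin.succAbove, Fin.lt_def, Fin.last]
        simp only [hC, Matrix.submatrix_apply, hA, Matrix.of_apply, h1, h2]
        ring_nf
      rw [hCentry]
      congr 1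
      congr 1
      ext i j
      have h1 : ((Fin.last (n+1)).succAbove ((Fin.last n).succAbove i) : ℕ) = (i : ℕ) := by
        rw [Fin.succAbove_last, Fin.succAbove_last]; simp
      have h2 : ((((Fin.last n).castSucc : Fin (n+2)).succAbove ((Fin.last n).succAbove j)) : ℕ) = (j : ℕ) := by
        rw [Fin.succAbove_last]
        simp [Fin.succAbove, Fin.lt_def, Fin.last, j.isLt]
      simp only [hC, Matrix.submatrix_apply, hA, Matrix.of_apply, h1, h2]
    rw [hCdet]
    ring
  rw [hmid]
  ring


theorem positivity_iff_totally_nonneg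
    (a b c u : ℕ → ℝ)
    (ha : ∀ n : ℕ, 1 ≤ n → 0 < a n)
    (hb : ∀ n : ℕ, 1 ≤ n → 0 < b n)
    (hc : ∀ n : ℕ, 1 ≤ n → 0 < c n)
    (hu : ∀ n : ℕ, 1 ≤ n → a n * u (n + 1) = b n * u n - c n * u (n - 1))
    (M : ℕ → ℕ → ℝ)
    (hM : ∀ i j : ℕ, M i j =
      if i = 0 ∧ j = 0 then u 1
      else if i = 0 ∧ j = 1 then c 1
      else if i = 1 ∧ j = 0 then u 0
      else if i = 1 ∧ j = 1 then b 1
      else if i = 1 ∧ j = 2 then c 2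
      else if 2 ≤ i ∧ j + 1 = i then a (i - 1)
      else if 2 ≤ i ∧ j = i then b i
      else if 2 ≤ i ∧ j = i + 1 then c (i + 1)
      else 0) :
    (∀ n : ℕ, 0 < u n) ↔ (0 < u 0 ∧ IsTotallyNonneg M) := by
  have hM00 : M 0 0 = u 1 := by rw [hM]; norm_num
  have hM01 : M 0 1 = c 1 := by rw [hM]; norm_num
  have hM10 : M 1 0 = u 0 := by rw [hM]; norm_num
  have hMd : ∀ i, 1 ≤ i → M i i = b i := by
    intro i hi
    rcases Nat.lt_or_ge i 2 with h2 | h2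
    · have hi1 : i = 1 := by omega
      subst hi1; rw [hM]; norm_num
    · rw [hM]; split_ifs <;> first | rfl | omega
  have hMsup : ∀ i, M i (i + 1) = c (i + 1) := by
    intro i
    rcases Nat.lt_or_ge i 2 with h2 | h2
    · interval_cases i <;> (rw [hM]; norm_num)
    · rw [hM]; split_ifs <;> first | rfl | omega
  have hMsub : ∀ i, 1 ≤ i → M (i + 1) i = a i := by
    intro i hi
    rcases Nat.lt_or_ge i 2 with h2 | h2
    · have hi1 : i = 1 := by omega
      subst hi1; rw [hM]; norm_num
    · rw [hM]; split_ifs <;> first | omega | (congr 1 <;> omega)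
  have hMlow : ∀ i j, j + 2 ≤ i → M i j = 0 := by
    intro i j h; rw [hM]; split_ifs <;> first | rfl | omega
  have hMup : ∀ i j, i + 2 ≤ j → M i j = 0 := by
    intro i j h; rw [hM]; split_ifs <;> first | rfl | omega
  set E : ℕ → ℕ → ℝ :=
    fun p n => (Matrix.of fun i j : Fin n => M (p + (i : ℕ)) (p + (j : ℕ))).det with hEdef
  have hErec : ∀ p n, E p (n + 2) =
      M (p + n + 1) (p + n + 1) * E p (n + 1)
      - M (p + n + 1) (p + n) * M (p + n) (p + n + 1) * E p n :=
    fun p n => blk_rec M hMlow hMup p n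
  have hErec0 : ∀ n, E 0 (n + 2) =
      M (n + 1) (n + 1) * E 0 (n + 1) - M (n + 1) n * M n (n + 1) * E 0 n := by
    intro n; have := hErec 0 n; simpa using this
  have hE0 : ∀ p, E p 0 = 1 := fun p => Matrix.det_fin_zero
  have hE1 : ∀ p, E p 1 = M p p := by
    intro p
    simp only [hEdef]
    rw [Matrix.det_fin_one]
    norm_num
  have hPa : ∀ n, 0 < ∏ i ∈ Finset.Icc 1 n, a i := by
    intro n; apply Finset.prod_pos; intro i hi; exact ha i (Finset.mem_Icc.mp hi).1
  have hPas : ∀ n, (∏ i ∈ Finset.Icc 1 (n + 1), a i) = (∏ i ∈ Finset.Icc 1 n, a i) * a (n + 1) :=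
    fun n => Finset.prod_Icc_succ_top (by omega) _
  have hUeq : ∀ n, E 0 (n + 1) = (∏ i ∈ Finset.Icc 1 n, a i) * u (n + 1) := by
    intro n
    induction n using Nat.twoStepInduction with
    | zero =>
      simp only [Nat.zero_add]
      rw [hE1 0, hM00, show Finset.Icc 1 0 = ∅ from Finset.Icc_eq_empty (by omega),
        Finset.prod_empty, one_mul]
    | one =>
      have h := hErec0 0
      simp only [Nat.zero_add] at h
      rw [show (1 : ℕ) + 1 = 2 from rfl, h, hMd 1 le_rfl, hE1 0, hM00, hM10, hM01, hE0 0]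
      rw [Finset.Icc_self, Finset.prod_singleton]
      have h2 := hu 1 (by omega)
      norm_num at h2
      linarith
    | more n ih1 ih2 =>
      rw [show n + 2 + 1 = n + 1 + 2 from rfl, hErec0 (n + 1),
        hMd (n + 1 + 1) (by omega), hMsub (n + 1) (by omega), hMsup (n + 1), ih1, ih2]
      have h2 := hu (n + 1 + 1) (by omega)
      rw [show n + 1 + 1 - 1 = n + 1 from rfl] at h2
      rw [show n + 1 + 1 + 1 = n + 1 + 2 from rfl] at h2
      rw [show n + 2 = n + 1 + 1 from rfl, hPas (n + 1)]
      linear_combination (-(∏ i ∈ Finset.Icc 1 (n + 1), a i)) * h2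
        + c (n + 1 + 1) * u (n + 1) * hPas n
  -- forward direction pieces
  have hforward : (∀ n : ℕ, 0 < u n) → ∀ p n, 0 < E p n := by
    intro hupos
    have hUpos : ∀ n, 0 < E 0 n := by
      intro n
      rcases n with _ | m
      · rw [hE0]; norm_num
      · rw [hUeq m]; exact mul_pos (hPa m) (hupos (m + 1))
    intro p n
    rcases p with _ | q
    · exact hUpos n
    · have hGrec : ∀ m, E 0 (q + m + 3) =
          M (q + m + 2) (q + m + 2) * E 0 (q + m + 2)
          - M (q + m + 2) (q + m + 1) * M (q + m + 1) (q + m + 2) * E 0 (q + m + 1) := by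
        intro m
        have h := hErec0 (q + m + 1)
        rw [show q + m + 1 + 2 = q + m + 3 from rfl, show q + m + 1 + 1 = q + m + 2 from rfl] at h
        exact h
      have hFrec : ∀ m, E (q + 1) (m + 2) =
          M (q + m + 2) (q + m + 2) * E (q + 1) (m + 1)
          - M (q + m + 2) (q + m + 1) * M (q + m + 1) (q + m + 2) * E (q + 1) m := by
        intro m
        have h := hErec (q + 1) m
        rw [show q + 1 + m + 1 = q + m + 2 by omega, show q + 1 + m = q + m + 1 by omega] at h
        exact h
      have hXpos : ∀ m, 0 < E (q + 1) (m + 1) * E 0 (q + m + 1) - E 0 (q + m + 2) * E (q + 1) m := by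
        intro m
        induction m with
        | zero =>
          simp only [Nat.add_zero, Nat.zero_add]
          rw [hE1 (q + 1), hE0 (q + 1), hMd (q + 1) (by omega)]
          rw [show q + 2 = q + 1 + 1 from rfl, hUeq q, hUeq (q + 1), hPas q]
          have h2 := hu (q + 1) (by omega)
          rw [show q + 1 - 1 = q from rfl] at h2
          have key : b (q + 1) * ((∏ i ∈ Finset.Icc 1 q, a i) * u (q + 1))
              - (∏ i ∈ Finset.Icc 1 q, a i) * a (q + 1) * u (q + 1 + 1)
              = (∏ i ∈ Finset.Icc 1 q, a i) * (c (q + 1) * u q) := by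
            linear_combination (-(∏ i ∈ Finset.Icc 1 q, a i)) * h2
          have hpos : 0 < (∏ i ∈ Finset.Icc 1 q, a i) * (c (q + 1) * u q) :=
            mul_pos (hPa q) (mul_pos (hc (q + 1) (by omega)) (hupos q))
          nlinarith [key, hpos]
        | succ m ihm =>
          rw [show m + 1 + 1 = m + 2 from rfl, show q + (m + 1) + 1 = q + m + 2 by omega,
            show q + (m + 1) + 2 = q + m + 3 by omega, hFrec m, hGrec m]
          have hγ : 0 < M (q + m + 2) (q + m + 1) * M (q + m + 1) (q + m + 2) := by
            rw [show q + m + 2 = q + m + 1 + 1 from rfl, hMsub (q + m + 1) (by omega),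
              hMsup (q + m + 1)]
            exact mul_pos (ha _ (by omega)) (hc _ (by omega))
          nlinarith [mul_pos hγ ihm]
      have hFpos : ∀ m, 0 < E (q + 1) m := by
        intro m
        induction m with
        | zero => rw [hE0]; norm_num
        | succ m ihm =>
          have hx := hXpos m
          have hg1 : 0 < E 0 (q + m + 1) := hUpos _
          have hg2 : 0 < E 0 (q + m + 2) := hUpos _
          nlinarith [mul_pos hg2 ihm, hx, hg1]
      exact hFpos n
  constructor
  · intro hupos
    refine ⟨hupos 0, ?_⟩
    have hMnn : ∀ i j, 0 ≤ M i j := by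
      intro i j
      rw [hM]
      split_ifs
      all_goals first
        | exact le_refl 0
        | exact (hupos _).le
        | exact (hb _ (by omega)).le
        | exact (hc _ (by omega)).le
        | exact (ha _ (by omega)).le
    intro k r s hrr hss
    exact tridiag_tn M hMlow hMup hMnn (fun p n => hforward hupos p n) k r s hrr hss
  · rintro ⟨h0, hTN⟩
    have hge : ∀ n, 0 ≤ u (n + 1) := by
      intro n
      have hmin := hTN n (fun i => (i : ℕ)) (fun i => (i : ℕ)) Fin.val_strictMono Fin.val_strictMono
      have hEq : (Matrix.of fun i j : Fin (n + 1) => M ((i : ℕ)) ((j : ℕ)))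
          = Matrix.of fun i j : Fin (n + 1) => M (0 + (i : ℕ)) (0 + (j : ℕ)) := by
        ext i j
        simp
      rw [hEq] at hmin
      have hmin' : 0 ≤ E 0 (n + 1) := hmin
      rw [hUeq n] at hmin'
      nlinarith [hPa n]
    intro n
    induction n with
    | zero => exact h0
    | succ m ihm =>
      rcases (hge m).lt_or_eq with h | h
      · exact h
      · exfalso
        have h2 := hu (m + 1) (by omega)
        rw [show m + 1 - 1 = m from rfl] at h2
        have h3 : 0 ≤ a (m + 1) * u (m + 2) :=
          mul_nonneg (ha (m + 1) (by omega)).le (hge (m + 1))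
        have h4 : 0 < c (m + 1) * u m := mul_pos (hc (m + 1) (by omega)) ihm
        rw [← h] at h2
        simp only [mul_zero, zero_sub] at h2
        linarith
end

section
/- Let a(n), b(n), c(n) be real polynomials in n of the same degree δ with leading coefficients a, b, c respectively, such that a > 0, b > 0, c > 0 and a(n), b(n), c(n) > 0 for all integers n ≥ 1. If a sequence (u_n)_{n≥0} is a solution of a(n)u_{n+1} = b(n)u_n − c(n)u_{n−1} (n ≥ 1) and is eventually sign-definite, then b² ≥ 4ac. -/
open Filter Polynomial Topology

theorem step_lemma (A B C Pv Qv Rv rn rn1 m Cb d ε : ℝ)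
    (hA : 0 < A) (hB : 0 < B) (hP : 0 < Pv) (hrn : 0 < rn)
    (hb2 : B^2 < 4*A*C)
    (hm : m = (4*A*C - B^2)/(4*A)) (hCbdef : Cb = B/A + 1)
    (hd : d = m/(2*Cb)) (hε : ε = m/(2*(Cb+1)))
    (heq : Pv*(rn1*rn) = Qv*rn - Rv)
    (hub : rn ≤ Cb)
    (hQ : A*Qv ≤ (B+ε)*Pv) (hR : (C-ε)*Pv ≤ A*Rv) :
    A*rn1 ≤ A*rn - d := by
  have hm0 : 0 < m := by rw [hm]; exact div_pos (by linarith) (by linarith)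
  have hCb0 : 0 < Cb := by rw [hCbdef]; positivity
  have hd0 : 0 < d := by rw [hd]; positivity
  have hε0 : 0 < ε := by rw [hε]; positivity
  have hquad : m ≤ A*rn^2 - B*rn + C := by
    rw [hm, div_le_iff₀ (by positivity)]
    nlinarith [sq_nonneg (2*A*rn - B)]
  have h2 : A*(Pv*(rn1*rn)) = A*Qv*rn - A*Rv := by linear_combination A*heq
  have h5 : A*rn1*rn ≤ (B+ε)*rn - (C-ε) :=
    (mul_le_mul_iff_of_pos_right hP).mp (by nlinarith : (A*rn1*rn)*Pv ≤ ((B+ε)*rn - (C-ε))*Pv)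
  have hεb : ε*(rn+1) ≤ m/2 := by
    rw [hε, div_mul_eq_mul_div, div_le_div_iff₀ (by positivity) (by norm_num)]
    nlinarith
  have hdb : d*rn ≤ m/2 := by
    rw [hd, div_mul_eq_mul_div, div_le_div_iff₀ (by positivity) (by norm_num)]
    nlinarith
  have h6 : A*rn1*rn ≤ (A*rn - d)*rn := by nlinarith
  exact le_of_mul_le_mul_right (by linarith [h6]) hrn

theorem aux_false (P Q R : Polynomial ℝ)
    (hdQ : Q.natDegree = P.natDegree) (hdR : R.natDegree = P.natDegree)
    (hPl : 0 < P.leadingCoeff) (hQl : 0 < Q.leadingCoeff) (hRl : 0 < R.leadingCoeff)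
    (hPpos : ∀ n : ℕ, 1 ≤ n → 0 < P.eval (n : ℝ))
    (hQpos : ∀ n : ℕ, 1 ≤ n → 0 < Q.eval (n : ℝ))
    (hRpos : ∀ n : ℕ, 1 ≤ n → 0 < R.eval (n : ℝ))
    (v : ℕ → ℝ)
    (hv : ∀ n : ℕ, 1 ≤ n →
      P.eval (n : ℝ) * v (n + 1) = Q.eval (n : ℝ) * v n - R.eval (n : ℝ) * v (n - 1))
    (N : ℕ) (hvpos : ∀ n : ℕ, N ≤ n → 0 < v n)
    (hlt : Q.leadingCoeff ^ 2 < 4 * P.leadingCoeff * R.leadingCoeff) : False := by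
  set A := P.leadingCoeff with hAdef
  set B := Q.leadingCoeff with hBdef
  set C := R.leadingCoeff with hCdef
  have hP0 : P ≠ 0 := leadingCoeff_ne_zero.mp (ne_of_gt hPl)
  have hQ0 : Q ≠ 0 := leadingCoeff_ne_zero.mp (ne_of_gt hQl)
  have hR0 : R ≠ 0 := leadingCoeff_ne_zero.mp (ne_of_gt hRl)
  have hdegQ : Q.degree = P.degree := by
    rw [degree_eq_natDegree hQ0, degree_eq_natDegree hP0, hdQ]
  have hdegR : R.degree = P.degree := by
    rw [degree_eq_natDegree hR0, degree_eq_natDegree hP0, hdR]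
  set m : ℝ := (4*A*C - B^2)/(4*A) with hm
  set Cb : ℝ := B/A + 1 with hCbdef
  set d : ℝ := m/(2*Cb) with hd
  set ε : ℝ := m/(2*(Cb+1)) with hε
  have hm0 : 0 < m := div_pos (by nlinarith) (by linarith)
  have hCb0 : 0 < Cb := by positivity
  have hd0 : 0 < d := by positivity
  have hε0 : 0 < ε := by positivity
  -- limits
  have hQP : Tendsto (fun n : ℕ => Q.eval (n:ℝ) / P.eval (n:ℝ)) atTop (𝓝 (B/A)) :=
    (Polynomial.div_tendsto_leadingCoeff_div_of_degree_eq Q P hdegQ).comp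
      tendsto_natCast_atTop_atTop
  have hRP : Tendsto (fun n : ℕ => R.eval (n:ℝ) / P.eval (n:ℝ)) atTop (𝓝 (C/A)) :=
    (Polynomial.div_tendsto_leadingCoeff_div_of_degree_eq R P hdegR).comp
      tendsto_natCast_atTop_atTop
  have hAne : A ≠ 0 := ne_of_gt hPl
  have hE1 : ∀ᶠ n : ℕ in atTop, A * (Q.eval ((n:ℝ)+1) / P.eval ((n:ℝ)+1)) < B + ε := by
    have h1 : Tendsto (fun n : ℕ => A * (Q.eval ((↑(n+1)):ℝ) / P.eval ((↑(n+1)):ℝ))) atTop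
        (𝓝 (A * (B/A))) := (hQP.comp (tendsto_add_atTop_nat 1)).const_mul A
    rw [mul_div_cancel₀ B hAne] at h1
    filter_upwards [h1.eventually_lt_const (show B < B + ε by linarith)] with n hn
    push_cast at hn; exact hn
  have hE2 : ∀ᶠ n : ℕ in atTop, C - ε < A * (R.eval ((n:ℝ)+1) / P.eval ((n:ℝ)+1)) := by
    have h1 : Tendsto (fun n : ℕ => A * (R.eval ((↑(n+1)):ℝ) / P.eval ((↑(n+1)):ℝ))) atTop
        (𝓝 (A * (C/A))) := (hRP.comp (tendsto_add_atTop_nat 1)).const_mul A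
    rw [mul_div_cancel₀ C hAne] at h1
    filter_upwards [h1.eventually_const_lt (show C - ε < C by linarith)] with n hn
    push_cast at hn; exact hn
  have hE3 : ∀ᶠ n : ℕ in atTop, Q.eval (n:ℝ) / P.eval (n:ℝ) ≤ Cb :=
    (hQP.eventually_lt_const (show B/A < Cb by rw [hCbdef]; nlinarith [div_pos hQl hPl])).mono
      fun n h => le_of_lt h
  set N₁ : ℕ := max N 1 with hN₁
  -- ratio sequence
  set r : ℕ → ℝ := fun n => v (n+1) / v n with hr
  have hrpos : ∀ n, N ≤ n → 0 < r n := fun n hn =>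
    div_pos (hvpos _ (by omega)) (hvpos _ hn)
  -- key equation
  have heq : ∀ n, N₁ ≤ n →
      P.eval ((n:ℝ)+1) * (r (n+1) * r n) = Q.eval ((n:ℝ)+1) * r n - R.eval ((n:ℝ)+1) := by
    intro n hn
    have h1 := hv (n+1) (by omega)
    simp only [Nat.add_sub_cancel] at h1
    push_cast at h1
    have hvn : v n ≠ 0 := ne_of_gt (hvpos n (by omega))
    have hvn1 : v (n+1) ≠ 0 := ne_of_gt (hvpos (n+1) (by omega))
    have hrr : r (n+1) * r n = v (n+1+1) / v n := by
      simp only [hr]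
      field_simp
    rw [hrr, hr]
    field_simp
    linear_combination h1
  -- upper bound on ratios
  have hub : ∀ n, N₁ ≤ n → Q.eval ((n:ℝ)+1) / P.eval ((n:ℝ)+1) ≤ Cb → r (n+1) ≤ Cb := by
    intro n hn hQPn
    have h1 := heq n hn
    have hPk : 0 < P.eval ((n:ℝ)+1) := by
      have := hPpos (n+1) (by omega); push_cast at this; exact this
    have hRk : 0 < R.eval ((n:ℝ)+1) := by
      have := hRpos (n+1) (by omega); push_cast at this; exact this
    have hrn : 0 < r n := hrpos n (by omega)
    have hrn1 : 0 < r (n+1) := hrpos (n+1) (by omega)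
    have h2 : r (n+1) < Q.eval ((n:ℝ)+1) / P.eval ((n:ℝ)+1) := by
      rw [lt_div_iff₀ hPk]
      calc r (n+1) * P.eval ((n:ℝ)+1) = (P.eval ((n:ℝ)+1) * (r (n+1) * r n)) / r n := by
            field_simp
        _ < Q.eval ((n:ℝ)+1) := by
            rw [h1, div_lt_iff₀ hrn]
            nlinarith
    exact h2.le.trans hQPn
  -- choose n₀
  obtain ⟨n₀, hn₀⟩ := eventually_atTop.mp
    ((hE1.and (hE2.and hE3)).and (eventually_ge_atTop (N₁ + 1)))
  -- step inequality
  have hstep : ∀ n, n₀ ≤ n → A * r (n+1) ≤ A * r n - d := by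
    intro n hn
    obtain ⟨⟨h1, h2, _⟩, h4⟩ := hn₀ n hn
    obtain ⟨⟨_, _, h3'⟩, _⟩ := hn₀ (n+1) (by omega)
    have hPk : 0 < P.eval ((n:ℝ)+1) := by
      have := hPpos (n+1) (by omega); push_cast at this; exact this
    have hrn : 0 < r n := hrpos n (by omega)
    -- r n ≤ Cb : n = k+1 with k ≥ N₁
    have hrnCb : r n ≤ Cb := by
      obtain ⟨k, rfl⟩ : ∃ k, n = k + 1 := ⟨n - 1, by omega⟩
      refine hub k (by omega) ?_
      have : Q.eval ((↑(k+1):ℝ)) / P.eval ((↑(k+1):ℝ)) ≤ Cb := by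
        obtain ⟨⟨_, _, h3⟩, _⟩ := hn₀ (k+1) (by omega)
        exact h3
      push_cast at this; exact this
    refine step_lemma A B C (P.eval ((n:ℝ)+1)) (Q.eval ((n:ℝ)+1)) (R.eval ((n:ℝ)+1))
      (r n) (r (n+1)) m Cb d ε hPl hQl hPk hrn hlt hm hCbdef hd hε
      (heq n (by omega)) hrnCb ?_ ?_
    · calc A * Q.eval ((n:ℝ)+1) = A * (Q.eval ((n:ℝ)+1) / P.eval ((n:ℝ)+1)) * P.eval ((n:ℝ)+1) := by
            field_simp
        _ ≤ (B + ε) * P.eval ((n:ℝ)+1) :=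
            mul_le_mul_of_nonneg_right (le_of_lt h1) (le_of_lt hPk)
    · calc (C - ε) * P.eval ((n:ℝ)+1)
          ≤ A * (R.eval ((n:ℝ)+1) / P.eval ((n:ℝ)+1)) * P.eval ((n:ℝ)+1) :=
            mul_le_mul_of_nonneg_right (le_of_lt h2) (le_of_lt hPk)
        _ = A * R.eval ((n:ℝ)+1) := by field_simp
  -- induction
  have hind : ∀ k : ℕ, A * r (n₀ + k) ≤ A * r n₀ - k * d := by
    intro k
    induction k with
    | zero => simp
    | succ k ih =>
      have := hstep (n₀ + k) (by omega)
      have h' : A * r (n₀ + (k+1)) ≤ A * r (n₀ + k) - d := this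
      push_cast
      linarith
  obtain ⟨k, hk⟩ := exists_nat_gt (A * r n₀ / d)
  have hk' : A * r n₀ < k * d := by
    rwa [div_lt_iff₀ hd0] at hk
  have h1 := hind k
  have h2 : 0 < r (n₀ + k) := by
    obtain ⟨-, hge⟩ := hn₀ (n₀ + k) (by omega)
    exact hrpos _ (by omega)
  nlinarith

theorem eventually_sign_definite_necessary
    (δ : ℕ) (P Q R : Polynomial ℝ)
    (hPd : P.natDegree = δ) (hQd : Q.natDegree = δ) (hRd : R.natDegree = δ)
    (hPl : 0 < P.leadingCoeff) (hQl : 0 < Q.leadingCoeff) (hRl : 0 < R.leadingCoeff)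
    (hPpos : ∀ n : ℕ, 1 ≤ n → 0 < P.eval (n : ℝ))
    (hQpos : ∀ n : ℕ, 1 ≤ n → 0 < Q.eval (n : ℝ))
    (hRpos : ∀ n : ℕ, 1 ≤ n → 0 < R.eval (n : ℝ))
    (u : ℕ → ℝ)
    (hu : ∀ n : ℕ, 1 ≤ n →
      P.eval (n : ℝ) * u (n + 1) = Q.eval (n : ℝ) * u n - R.eval (n : ℝ) * u (n - 1))
    (hsd : ∃ N : ℕ, (∀ n : ℕ, N ≤ n → 0 < u n) ∨ (∀ n : ℕ, N ≤ n → u n < 0)) :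
    Q.leadingCoeff ^ 2 ≥ 4 * P.leadingCoeff * R.leadingCoeff := by
  by_contra h
  push_neg at h
  obtain ⟨N, hpos | hneg⟩ := hsd
  · exact aux_false P Q R (hQd.trans hPd.symm) (hRd.trans hPd.symm) hPl hQl hRl
      hPpos hQpos hRpos u hu N hpos h
  · refine aux_false P Q R (hQd.trans hPd.symm) (hRd.trans hPd.symm) hPl hQl hRl
      hPpos hQpos hRpos (fun n => -u n) (fun n hn => by
        show P.eval (n:ℝ) * -u (n + 1) = Q.eval (n:ℝ) * -u n - R.eval (n:ℝ) * -u (n - 1)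
        have := hu n hn; linarith)
      N (fun n hn => by have := hneg n hn; simpa using this) h
end

section
/- Let a(n), b(n), c(n) be real polynomials in n of the same degree δ with leading coefficients a, b, c respectively, such that a > 0, b > 0, c > 0 and a(n), b(n), c(n) > 0 for all integers n ≥ 1. Suppose (u_n)_{n≥0} is a solution of a(n)u_{n+1} = b(n)u_n − c(n)u_{n−1} (n ≥ 1) with u_n > 0 for all n ≥ 0. Then there exists a real number ρ₀ > 0 such that u_1 ≥ ρ₀ u_0 and the solution (u*_n)_{n≥0} of the same difference equation determined by u*_0 = 1 and u*_1 = ρ₀ satisfies u*_n > 0 for all n ≥ 0 and is a minimal solution. -/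
open Filter Finset

private noncomputable def pprod (a c : ℕ → ℝ) (k : ℕ) : ℝ := ∏ j ∈ range k, (c (j+1) / a (j+1))

private lemma pprod_zero (a c : ℕ → ℝ) : pprod a c 0 = 1 := by simp [pprod]

private lemma pprod_succ (a c : ℕ → ℝ) (m : ℕ) :
    pprod a c (m+1) = pprod a c m * (c (m+1) / a (m+1)) := prod_range_succ _ _

private lemma pprod_pos (a c : ℕ → ℝ) (ha : ∀ m : ℕ, 0 < a (m+1)) (hc : ∀ m : ℕ, 0 < c (m+1)) :
    ∀ n, 0 < pprod a c n := by
  intro n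
  exact prod_pos fun j _ => div_pos (hc j) (ha j)

private lemma sol_unique (a b c : ℕ → ℝ) (ha : ∀ m : ℕ, a (m+1) ≠ 0)
    (x y : ℕ → ℝ)
    (hx : ∀ m : ℕ, a (m+1) * x (m+2) = b (m+1) * x (m+1) - c (m+1) * x m)
    (hy : ∀ m : ℕ, a (m+1) * y (m+2) = b (m+1) * y (m+1) - c (m+1) * y m)
    (h0 : x 0 = y 0) (h1 : x 1 = y 1) : ∀ n, x n = y n := by
  have key : ∀ n, x n = y n ∧ x (n+1) = y (n+1) := by
    intro n
    induction n with
    | zero => exact ⟨h0, h1⟩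
    | succ m ih =>
      refine ⟨ih.2, ?_⟩
      have h := hx m
      rw [ih.1, ih.2, ← hy m] at h
      exact mul_left_cancel₀ (ha m) h
  exact fun n => (key n).1

private lemma wronskian_eq (a b c : ℕ → ℝ) (ha : ∀ m : ℕ, a (m+1) ≠ 0)
    (x y : ℕ → ℝ)
    (hx : ∀ m : ℕ, a (m+1) * x (m+2) = b (m+1) * x (m+1) - c (m+1) * x m)
    (hy : ∀ m : ℕ, a (m+1) * y (m+2) = b (m+1) * y (m+1) - c (m+1) * y m) :
    ∀ n, x n * y (n+1) - x (n+1) * y n = (x 0 * y 1 - x 1 * y 0) * pprod a c n := by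
  intro n
  induction n with
  | zero => simp [pprod_zero]
  | succ m ih =>
    have key : a (m+1) * (x (m+1) * y (m+2) - x (m+2) * y (m+1))
        = c (m+1) * (x m * y (m+1) - x (m+1) * y m) := by
      linear_combination x (m+1) * hy m - y (m+1) * hx m
    rw [pprod_succ, ← mul_assoc, ← ih]
    have ham := ha m
    field_simp
    linear_combination key

private lemma ratio_eq (a b c : ℕ → ℝ) (ha : ∀ m : ℕ, a (m+1) ≠ 0)
    (v w : ℕ → ℝ) (hvpos : ∀ n, 0 < v n)
    (hv : ∀ m : ℕ, a (m+1) * v (m+2) = b (m+1) * v (m+1) - c (m+1) * v m)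
    (hw : ∀ m : ℕ, a (m+1) * w (m+2) = b (m+1) * w (m+1) - c (m+1) * w m) :
    ∀ n, w n / v n = w 0 / v 0 + (v 0 * w 1 - v 1 * w 0) *
      ∑ k ∈ range n, pprod a c k / (v k * v (k+1)) := by
  intro n
  induction n with
  | zero => simp
  | succ m ih =>
    rw [sum_range_succ, mul_add, ← add_assoc, ← ih]
    have hW : v m * w (m+1) - v (m+1) * w m = (v 0 * w 1 - v 1 * w 0) * pprod a c m :=
      wronskian_eq a b c ha v w hv hw m
    have h1 := (hvpos m).ne'
    have h2 := (hvpos (m+1)).ne'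
    field_simp
    linear_combination hW

private lemma minimality (a b c : ℕ → ℝ) (ha : ∀ m : ℕ, a (m+1) ≠ 0)
    (v w : ℕ → ℝ) (hvpos : ∀ n, 0 < v n)
    (hv : ∀ m : ℕ, a (m+1) * v (m+2) = b (m+1) * v (m+1) - c (m+1) * v m)
    (hw : ∀ m : ℕ, a (m+1) * w (m+2) = b (m+1) * w (m+1) - c (m+1) * w m)
    (hW0 : v 0 * w 1 - v 1 * w 0 ≠ 0)
    (hT : Tendsto (fun n => ∑ k ∈ range n, pprod a c k / (v k * v (k+1))) atTop atTop) :
    Tendsto (fun n : ℕ => v n / w n) atTop (nhds 0) := by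
  have hr := ratio_eq a b c ha v w hvpos hv hw
  have habs : Tendsto (fun n => |w n / v n|) atTop atTop := by
    rcases hW0.lt_or_gt with hneg | hpos
    · have h1 : Tendsto (fun n => (v 0 * w 1 - v 1 * w 0) *
          ∑ k ∈ range n, pprod a c k / (v k * v (k+1))) atTop atBot :=
        Tendsto.neg_mul_atTop hneg tendsto_const_nhds hT
      have h2 := tendsto_atBot_add_const_left atTop (w 0 / v 0) h1
      have h3 : Tendsto (fun n => w n / v n) atTop atBot :=
        h2.congr fun n => (hr n).symm
      exact tendsto_abs_atBot_atTop.comp h3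
    · have h1 : Tendsto (fun n => (v 0 * w 1 - v 1 * w 0) *
          ∑ k ∈ range n, pprod a c k / (v k * v (k+1))) atTop atTop :=
        Tendsto.pos_mul_atTop hpos tendsto_const_nhds hT
      have h2 := tendsto_atTop_add_const_left atTop (w 0 / v 0) h1
      have h3 : Tendsto (fun n => w n / v n) atTop atTop :=
        h2.congr fun n => (hr n).symm
      exact tendsto_abs_atTop_atTop.comp h3
  have hinv : Tendsto (fun n => |w n / v n|⁻¹) atTop (nhds 0) := habs.inv_tendsto_atTop
  rw [tendsto_zero_iff_abs_tendsto_zero]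
  refine hinv.congr fun n => ?_
  simp only [Function.comp_apply]
  rw [← abs_inv, inv_div]
theorem positive_solution_gives_minimal_solution
    (δ : ℕ) (P Q R : Polynomial ℝ)
    (hPd : P.natDegree = δ) (hQd : Q.natDegree = δ) (hRd : R.natDegree = δ)
    (hPl : 0 < P.leadingCoeff) (hQl : 0 < Q.leadingCoeff) (hRl : 0 < R.leadingCoeff)
    (hPpos : ∀ n : ℕ, 1 ≤ n → 0 < P.eval (n : ℝ))
    (hQpos : ∀ n : ℕ, 1 ≤ n → 0 < Q.eval (n : ℝ))
    (hRpos : ∀ n : ℕ, 1 ≤ n → 0 < R.eval (n : ℝ))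
    (u : ℕ → ℝ)
    (hu : ∀ n : ℕ, 1 ≤ n →
      P.eval (n : ℝ) * u (n + 1) = Q.eval (n : ℝ) * u n - R.eval (n : ℝ) * u (n - 1))
    (hupos : ∀ n : ℕ, 0 < u n) :
    ∃ ρ₀ : ℝ, 0 < ρ₀ ∧ u 1 ≥ ρ₀ * u 0 ∧
      ∀ v : ℕ → ℝ,
        (∀ n : ℕ, 1 ≤ n →
          P.eval (n : ℝ) * v (n + 1) = Q.eval (n : ℝ) * v n - R.eval (n : ℝ) * v (n - 1)) →
        v 0 = 1 → v 1 = ρ₀ →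
        (∀ n : ℕ, 0 < v n) ∧
        (∀ w : ℕ → ℝ,
          (∀ n : ℕ, 1 ≤ n →
            P.eval (n : ℝ) * w (n + 1) = Q.eval (n : ℝ) * w n - R.eval (n : ℝ) * w (n - 1)) →
          (¬ ∃ t : ℝ, ∀ n : ℕ, w n = t * v n) →
          Filter.Tendsto (fun n : ℕ => v n / w n) Filter.atTop (nhds 0)) := by
  classical
  set a : ℕ → ℝ := fun n : ℕ => P.eval (n : ℝ) with hadef
  set b : ℕ → ℝ := fun n : ℕ => Q.eval (n : ℝ) with hbdef
  set c : ℕ → ℝ := fun n : ℕ => R.eval (n : ℝ) with hcdef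
  have hapos : ∀ m : ℕ, 0 < a (m+1) := fun m => hPpos (m+1) (Nat.le_add_left 1 m)
  have hbpos : ∀ m : ℕ, 0 < b (m+1) := fun m => hQpos (m+1) (Nat.le_add_left 1 m)
  have hcpos : ∀ m : ℕ, 0 < c (m+1) := fun m => hRpos (m+1) (Nat.le_add_left 1 m)
  have hane : ∀ m : ℕ, a (m+1) ≠ 0 := fun m => (hapos m).ne'
  have hu' : ∀ m : ℕ, a (m+1) * u (m+2) = b (m+1) * u (m+1) - c (m+1) * u m := by
    intro m
    have h := hu (m+1) (Nat.le_add_left 1 m)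
    simp only [Nat.add_sub_cancel] at h
    exact h
  have hppos : ∀ n, 0 < pprod a c n := pprod_pos a c hapos hcpos
  set σ : ℕ → ℝ := fun n => pprod a c n / (u n * u (n+1)) with hσdef
  have hσpos : ∀ n, 0 < σ n := fun n =>
    div_pos (hppos n) (mul_pos (hupos n) (hupos (n+1)))
  have hσeq : ∀ n, pprod a c n = σ n * (u n * u (n+1)) := fun n =>
    (div_mul_cancel₀ _ (mul_pos (hupos n) (hupos (n+1))).ne').symm
  suffices h : ∃ V : ℕ → ℝ,
      (∀ m : ℕ, a (m+1) * V (m+2) = b (m+1) * V (m+1) - c (m+1) * V m) ∧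
      V 0 = 1 ∧ (∀ n, 0 < V n) ∧ u 1 ≥ V 1 * u 0 ∧
      Filter.Tendsto (fun n => ∑ k ∈ Finset.range n, pprod a c k / (V k * V (k+1)))
        Filter.atTop Filter.atTop by
    obtain ⟨V, hVsol, hV0, hVpos, hVge, hT⟩ := h
    refine ⟨V 1, hVpos 1, hVge, ?_⟩
    intro v hv hv0 hv1
    have hv' : ∀ m : ℕ, a (m+1) * v (m+2) = b (m+1) * v (m+1) - c (m+1) * v m := by
      intro m
      have h := hv (m+1) (Nat.le_add_left 1 m)
      simp only [Nat.add_sub_cancel] at h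
      exact h
    have hveq : ∀ n, v n = V n :=
      sol_unique a b c hane v V hv' hVsol (by rw [hv0, hV0]) (by rw [hv1])
    have hvpos : ∀ n, 0 < v n := fun n => (hveq n) ▸ hVpos n
    refine ⟨hvpos, ?_⟩
    intro w hw hnw
    have hw' : ∀ m : ℕ, a (m+1) * w (m+2) = b (m+1) * w (m+1) - c (m+1) * w m := by
      intro m
      have h := hw (m+1) (Nat.le_add_left 1 m)
      simp only [Nat.add_sub_cancel] at h
      exact h
    have hW0 : v 0 * w 1 - v 1 * w 0 ≠ 0 := by
      intro hzero
      apply hnw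
      refine ⟨w 0, fun n => ?_⟩
      have hy : ∀ m : ℕ, a (m+1) * (w 0 * v (m+2))
          = b (m+1) * (w 0 * v (m+1)) - c (m+1) * (w 0 * v m) := by
        intro m
        linear_combination w 0 * hv' m
      exact sol_unique a b c hane w (fun n => w 0 * v n) hw' hy
        (by show w 0 = w 0 * v 0; rw [hv0, mul_one])
        (by show w 1 = w 0 * v 1; rw [hv0] at hzero; linear_combination hzero) n
    have hTv : Filter.Tendsto (fun n => ∑ k ∈ Finset.range n, pprod a c k / (v k * v (k+1)))
        Filter.atTop Filter.atTop := by
      refine hT.congr fun n => ?_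
      exact Finset.sum_congr rfl fun k _ => by rw [hveq k, hveq (k+1)]
    exact minimality a b c hane v w hvpos hv' hw' hW0 hTv
  by_cases hsum : Summable σ
  · -- summable case : minimal solution vstar n = u n * τ n
    set τ : ℕ → ℝ := fun n => ∑' k, σ (k + n) with hτdef
    have hτsum : ∀ n, Summable fun k => σ (k + n) := fun n => (summable_nat_add_iff n).mpr hsum
    have hτrec : ∀ n, τ n = σ n + τ (n+1) := by
      intro n
      show (∑' (k : ℕ), σ (k + n)) = σ n + ∑' (k : ℕ), σ (k + (n+1))
      rw [Summable.tsum_eq_zero_add (hτsum n)]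
      simp only [Nat.zero_add]
      congr 1
      apply tsum_congr
      intro k
      congr 1
      omega
    have hτpos : ∀ n, 0 < τ n := by
      intro n
      have h1 : (0:ℝ) ≤ τ (n+1) := tsum_nonneg fun k => (hσpos _).le
      have h2 := hτrec n
      have h3 := hσpos n
      linarith
    have hτ0 : Filter.Tendsto τ Filter.atTop (nhds 0) := tendsto_sum_nat_add σ
    have hτinv : Filter.Tendsto (fun n => (τ n)⁻¹) Filter.atTop Filter.atTop := by
      apply Filter.Tendsto.inv_tendsto_nhdsGT_zero
      exact tendsto_nhdsWithin_iff.mpr ⟨hτ0, Filter.Eventually.of_forall fun n => hτpos n⟩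
    set vstar : ℕ → ℝ := fun n => u n * τ n with hvstardef
    have hvstarpos : ∀ n, 0 < vstar n := fun n => mul_pos (hupos n) (hτpos n)
    have hK : ∀ n, u n * vstar (n+1) - u (n+1) * vstar n = -pprod a c n := by
      intro n
      have h1 := hσeq n
      have h2 := hτrec n
      show u n * (u (n+1) * τ (n+1)) - u (n+1) * (u n * τ n) = -pprod a c n
      linear_combination h1 - (u n * u (n+1)) * h2
    have hVsol : ∀ m : ℕ, a (m+1) * vstar (m+2) = b (m+1) * vstar (m+1) - c (m+1) * vstar m := by
      intro m
      have hpp : a (m+1) * pprod a c (m+1) = c (m+1) * pprod a c m := by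
        rw [pprod_succ]
        have ham := hane m
        field_simp
      apply mul_left_cancel₀ (hupos (m+1)).ne'
      linear_combination a (m+1) * hK (m+1) + vstar (m+1) * hu' m - c (m+1) * hK m - hpp
    set V : ℕ → ℝ := fun n => (vstar 0)⁻¹ * vstar n with hVdef
    have hV0 : V 0 = 1 := inv_mul_cancel₀ (hvstarpos 0).ne'
    have hVpos : ∀ n, 0 < V n := fun n => mul_pos (inv_pos.mpr (hvstarpos 0)) (hvstarpos n)
    have hVsol' : ∀ m : ℕ, a (m+1) * V (m+2) = b (m+1) * V (m+1) - c (m+1) * V m := by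
      intro m
      show a (m+1) * ((vstar 0)⁻¹ * vstar (m+2)) = _
      linear_combination (vstar 0)⁻¹ * hVsol m
    have hτle : τ 1 ≤ τ 0 := by
      have h1 := hτrec 0
      have h2 := hσpos 0
      linarith
    have hVge : u 1 ≥ V 1 * u 0 := by
      have hne0 : u 0 ≠ 0 := (hupos 0).ne'
      have hτ0ne : τ 0 ≠ 0 := (hτpos 0).ne'
      have heq : V 1 * u 0 = u 1 * (τ 1 / τ 0) := by
        show (u 0 * τ 0)⁻¹ * (u 1 * τ 1) * u 0 = u 1 * (τ 1 / τ 0)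
        field_simp
      rw [heq]
      have h1 : τ 1 / τ 0 ≤ 1 := (div_le_one (hτpos 0)).mpr hτle
      nlinarith [hupos 1, div_pos (hτpos 1) (hτpos 0)]
    have hterm : ∀ k, pprod a c k / (V k * V (k+1))
        = vstar 0 ^ 2 * ((τ (k+1))⁻¹ - (τ k)⁻¹) := by
      intro k
      have h1 := hσeq k
      have h2 := hτrec k
      have hτkne : τ k ≠ 0 := (hτpos k).ne'
      have hτk1ne : τ (k+1) ≠ 0 := (hτpos (k+1)).ne'
      have hukne : u k ≠ 0 := (hupos k).ne'
      have huk1ne : u (k+1) ≠ 0 := (hupos (k+1)).ne'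
      have hvs0ne : vstar 0 ≠ 0 := (hvstarpos 0).ne'
      have hσk2 : σ k = τ k - τ (k+1) := by linarith [hτrec k]
      show pprod a c k / ((vstar 0)⁻¹ * (u k * τ k) * ((vstar 0)⁻¹ * (u (k+1) * τ (k+1))))
          = vstar 0 ^ 2 * ((τ (k+1))⁻¹ - (τ k)⁻¹)
      rw [h1, hσk2]
      show (τ k - τ (k+1)) * (u k * u (k+1)) /
          ((u 0 * τ 0)⁻¹ * (u k * τ k) * ((u 0 * τ 0)⁻¹ * (u (k+1) * τ (k+1))))
          = (u 0 * τ 0) ^ 2 * ((τ (k+1))⁻¹ - (τ k)⁻¹)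
      have h0ne : u 0 ≠ 0 := (hupos 0).ne'
      have hτ0ne : τ 0 ≠ 0 := (hτpos 0).ne'
      field_simp
    have hT : Filter.Tendsto (fun n => ∑ k ∈ Finset.range n, pprod a c k / (V k * V (k+1)))
        Filter.atTop Filter.atTop := by
      have hsumeq : ∀ n, ∑ k ∈ Finset.range n, pprod a c k / (V k * V (k+1))
          = vstar 0 ^ 2 * ((τ n)⁻¹ - (τ 0)⁻¹) := by
        intro n
        rw [Finset.sum_congr rfl fun k _ => hterm k, ← Finset.mul_sum,
          Finset.sum_range_sub (fun k => (τ k)⁻¹)]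
      have h1 : Filter.Tendsto (fun n => vstar 0 ^ 2 * ((τ n)⁻¹ - (τ 0)⁻¹))
          Filter.atTop Filter.atTop := by
        apply Filter.Tendsto.const_mul_atTop (pow_pos (hvstarpos 0) 2)
        exact Filter.tendsto_atTop_add_const_right _ _ hτinv
      exact h1.congr fun n => (hsumeq n).symm
    exact ⟨V, hVsol', hV0, hVpos, hVge, hT⟩
  · -- non-summable case : u itself is minimal
    set V : ℕ → ℝ := fun n => (u 0)⁻¹ * u n with hVdef
    have hV0 : V 0 = 1 := inv_mul_cancel₀ (hupos 0).ne'
    have hVpos : ∀ n, 0 < V n := fun n => mul_pos (inv_pos.mpr (hupos 0)) (hupos n)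
    have hVsol' : ∀ m : ℕ, a (m+1) * V (m+2) = b (m+1) * V (m+1) - c (m+1) * V m := by
      intro m
      show a (m+1) * ((u 0)⁻¹ * u (m+2)) = _
      linear_combination (u 0)⁻¹ * hu' m
    have hVge : u 1 ≥ V 1 * u 0 := by
      have : V 1 * u 0 = u 1 := by
        show (u 0)⁻¹ * u 1 * u 0 = u 1
        rw [mul_comm ((u 0)⁻¹) (u 1), mul_assoc, inv_mul_cancel₀ (hupos 0).ne', mul_one]
      rw [this]
    have hterm : ∀ k, pprod a c k / (V k * V (k+1)) = u 0 ^ 2 * σ k := by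
      intro k
      have hne0 : u 0 ≠ 0 := (hupos 0).ne'
      have hukne : u k ≠ 0 := (hupos k).ne'
      have huk1ne : u (k+1) ≠ 0 := (hupos (k+1)).ne'
      show pprod a c k / ((u 0)⁻¹ * u k * ((u 0)⁻¹ * u (k+1))) = u 0 ^ 2 * σ k
      rw [hσdef]
      field_simp
    have hS : Filter.Tendsto (fun n => ∑ k ∈ Finset.range n, σ k)
        Filter.atTop Filter.atTop :=
      (not_summable_iff_tendsto_nat_atTop_of_nonneg fun n => (hσpos n).le).mp hsum
    have hT : Filter.Tendsto (fun n => ∑ k ∈ Finset.range n, pprod a c k / (V k * V (k+1)))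
        Filter.atTop Filter.atTop := by
      have h1 := Filter.Tendsto.const_mul_atTop (pow_pos (hupos 0) 2) hS
      refine h1.congr fun n => ?_
      rw [Finset.mul_sum]
      exact Finset.sum_congr rfl fun k _ => (hterm k).symm
    exact ⟨V, hVsol', hV0, hVpos, hVge, hT⟩
end

section
/- Let a(n), b(n), c(n) be real polynomials in n of the same degree δ with leading coefficients a, b, c respectively, such that a > 0, b > 0, c > 0 and a(n), b(n), c(n) > 0 for all integers n ≥ 1. If b² > 4ac, then every nontrivial solution (u_n)_{n≥0} of a(n)u_{n+1} = b(n)u_n − c(n)u_{n−1} (n ≥ 1) is eventually sign-definite. -/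
/-- If a solution has two consecutive zeros, it is identically zero. -/
lemma allzero_aux (P Q R : Polynomial ℝ)
    (hPpos : ∀ n : ℕ, 1 ≤ n → 0 < P.eval (n : ℝ))
    (hRpos : ∀ n : ℕ, 1 ≤ n → 0 < R.eval (n : ℝ))
    (u : ℕ → ℝ)
    (hu : ∀ n : ℕ, 1 ≤ n →
      P.eval (n : ℝ) * u (n + 1) = Q.eval (n : ℝ) * u n - R.eval (n : ℝ) * u (n - 1))
    (k : ℕ) (h1 : u k = 0) (h2 : u (k + 1) = 0) : ∀ m, u m = 0 := by
  have up : ∀ j, u (k + j) = 0 ∧ u (k + j + 1) = 0 := by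
    intro j
    induction j with
    | zero => exact ⟨h1, h2⟩
    | succ j ih =>
      refine ⟨by rw [show k + (j+1) = k + j + 1 by omega]; exact ih.2, ?_⟩
      have hrec := hu (k + j + 1) (by omega)
      have hn1 : (k + j + 1) - 1 = k + j := by omega
      rw [hn1, ih.1, ih.2] at hrec
      have hP := hPpos (k + j + 1) (by omega)
      have hz : u (k + j + 1 + 1) = 0 := by nlinarith [hP]
      rw [show k + (j+1) + 1 = k + j + 1 + 1 by omega]; exact hz
  have down : ∀ j, j ≤ k → u (k - j) = 0 ∧ u (k - j + 1) = 0 := by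
    intro j
    induction j with
    | zero => exact fun _ => ⟨h1, by simpa using h2⟩
    | succ j ih =>
      intro hj
      have ih' := ih (by omega)
      have hn : 1 ≤ k - j := by omega
      have hrec := hu (k - j) hn
      have e1 : k - j + 1 = k - j + 1 := rfl
      rw [ih'.1, show (k - j : ℕ) + 1 = (k - j) + 1 from rfl] at hrec
      rw [ih'.2] at hrec
      have hR := hRpos (k - j) hn
      have hz : u ((k - j) - 1) = 0 := by nlinarith [hR]
      constructor
      · have : k - (j+1) = (k - j) - 1 := by omega
        rw [this]; exact hz
      · have : k - (j+1) + 1 = k - j := by omega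
        rw [this]; exact ih'.1
  intro m
  rcases le_or_gt k m with h | h
  · have := (up (m - k)).1
    rwa [show k + (m - k) = m by omega] at this
  · have := (down (k - m) (by omega)).1
    rwa [show k - (k - m) = m by omega] at this

/-- Positivity propagation. -/
lemma prop_pos (P Q R : Polynomial ℝ)
    (hPpos : ∀ n : ℕ, 1 ≤ n → 0 < P.eval (n : ℝ))
    (hRpos : ∀ n : ℕ, 1 ≤ n → 0 < R.eval (n : ℝ))
    (u : ℕ → ℝ)
    (hu : ∀ n : ℕ, 1 ≤ n →
      P.eval (n : ℝ) * u (n + 1) = Q.eval (n : ℝ) * u n - R.eval (n : ℝ) * u (n - 1))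
    (t : ℝ) (ht : 0 < t) (N : ℕ) (hN : 1 ≤ N)
    (hS : ∀ n : ℕ, N ≤ n → P.eval (n : ℝ) * t ^ 2 + R.eval (n : ℝ) ≤ Q.eval (n : ℝ) * t)
    (n0 : ℕ) (hn0 : N ≤ n0) (h1 : 0 < u (n0 + 1)) (h2 : t * u n0 ≤ u (n0 + 1)) :
    ∀ m, n0 + 1 ≤ m → 0 < u m := by
  have key : ∀ j, 0 < u (n0 + 1 + j) ∧ t * u (n0 + j) ≤ u (n0 + 1 + j) := by
    intro j
    induction j with
    | zero => exact ⟨h1, h2⟩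
    | succ j ih =>
      have hn : N ≤ n0 + 1 + j := by omega
      have hrec := hu (n0 + 1 + j) (by omega)
      have hn1 : (n0 + 1 + j) - 1 = n0 + j := by omega
      rw [hn1] at hrec
      have hP := hPpos (n0 + 1 + j) (by omega)
      have hR := hRpos (n0 + 1 + j) (by omega)
      have hSn := hS (n0 + 1 + j) hn
      have hq : t * u (n0 + 1 + j) ≤ u (n0 + 1 + j + 1) := by
        nlinarith [ih.1, ih.2, mul_pos hP ht]
      have hpos : 0 < u (n0 + 1 + j + 1) := lt_of_lt_of_le (mul_pos ht ih.1) hq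
      rw [show n0 + 1 + (j+1) = n0 + 1 + j + 1 by omega,
          show n0 + (j+1) = n0 + 1 + j by omega]
      exact ⟨hpos, hq⟩
  intro m hm
  have := (key (m - (n0 + 1))).1
  rwa [show n0 + 1 + (m - (n0 + 1)) = m by omega] at this

theorem eventually_sign_definite_sufficient
    (δ : ℕ) (P Q R : Polynomial ℝ)
    (hPd : P.natDegree = δ) (hQd : Q.natDegree = δ) (hRd : R.natDegree = δ)
    (hPl : 0 < P.leadingCoeff) (hQl : 0 < Q.leadingCoeff) (hRl : 0 < R.leadingCoeff)
    (hPpos : ∀ n : ℕ, 1 ≤ n → 0 < P.eval (n : ℝ))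
    (hQpos : ∀ n : ℕ, 1 ≤ n → 0 < Q.eval (n : ℝ))
    (hRpos : ∀ n : ℕ, 1 ≤ n → 0 < R.eval (n : ℝ))
    (hdisc : Q.leadingCoeff ^ 2 > 4 * P.leadingCoeff * R.leadingCoeff)
    (u : ℕ → ℝ)
    (hu : ∀ n : ℕ, 1 ≤ n →
      P.eval (n : ℝ) * u (n + 1) = Q.eval (n : ℝ) * u n - R.eval (n : ℝ) * u (n - 1))
    (hnontriv : ∃ n : ℕ, u n ≠ 0) :
    ∃ N : ℕ, (∀ n : ℕ, N ≤ n → 0 < u n) ∨ (∀ n : ℕ, N ≤ n → u n < 0) := by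
  classical
  set a := P.leadingCoeff with ha
  set b := Q.leadingCoeff with hb
  set c := R.leadingCoeff with hc
  set t : ℝ := b / (2 * a) with htdef
  have ht : 0 < t := div_pos hQl (by linarith)
  -- the key polynomial
  set S : Polynomial ℝ := Polynomial.C t * Q - Polynomial.C (t ^ 2) * P - R with hSdef
  have eQ : Q.coeff δ = b := by rw [← hQd]; exact Q.coeff_natDegree
  have eP : P.coeff δ = a := by rw [← hPd]; exact P.coeff_natDegree
  have eR : R.coeff δ = c := by rw [← hRd]; exact R.coeff_natDegree
  have hcoeff : S.coeff δ = t * b - t ^ 2 * a - c := by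
    simp only [hSdef, Polynomial.coeff_sub, Polynomial.coeff_C_mul, eQ, eP, eR]
  have hval : 0 < t * b - t ^ 2 * a - c := by
    have h4a : (0:ℝ) < 4 * a := by linarith
    have : t * b - t ^ 2 * a - c = (b ^ 2 - 4 * a * c) / (4 * a) := by
      field_simp [htdef]
      rw [htdef]; field_simp [hPl.ne']; ring
    rw [this]
    apply div_pos _ h4a
    nlinarith
  -- eventually S.eval n ≥ 0
  have hev : ∃ N : ℕ, 1 ≤ N ∧ ∀ n : ℕ, N ≤ n → 0 ≤ S.eval (n : ℝ) := by
    rcases Nat.eq_zero_or_pos δ with hδ | hδ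
    · -- constant case
      have hdegS : S.natDegree = 0 := by
        apply Nat.le_zero.mp
        rw [← hδ]
        apply le_trans (Polynomial.natDegree_sub_le _ _)
        simp only [max_le_iff]
        refine ⟨le_trans (Polynomial.natDegree_sub_le _ _) ?_, hRd.le⟩
        simp only [max_le_iff]
        exact ⟨le_trans (Polynomial.natDegree_C_mul_le _ _) hQd.le,
          le_trans (Polynomial.natDegree_C_mul_le _ _) hPd.le⟩
      have hSC : S = Polynomial.C (S.coeff 0) := Polynomial.eq_C_of_natDegree_eq_zero hdegS
      refine ⟨1, le_refl 1, fun n _ => ?_⟩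
      rw [hSC]
      simp only [Polynomial.eval_C]
      rw [hδ] at hcoeff
      rw [hcoeff]; linarith
    · have hSne : S.coeff δ ≠ 0 := by rw [hcoeff]; linarith
      have hdegle : S.natDegree ≤ δ := by
        apply le_trans (Polynomial.natDegree_sub_le _ _)
        simp only [max_le_iff]
        refine ⟨le_trans (Polynomial.natDegree_sub_le _ _) ?_, hRd.le⟩
        simp only [max_le_iff]
        exact ⟨le_trans (Polynomial.natDegree_C_mul_le _ _) hQd.le,
          le_trans (Polynomial.natDegree_C_mul_le _ _) hPd.le⟩
      have hdegS : S.natDegree = δ :=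
        le_antisymm hdegle (Polynomial.le_natDegree_of_ne_zero hSne)
      have hS0 : S ≠ 0 := fun h => hSne (by simp [h])
      have hlc : 0 < S.leadingCoeff := by
        rw [Polynomial.leadingCoeff, hdegS, hcoeff]; linarith
      have hdpos : 0 < S.degree := by
        rw [Polynomial.degree_eq_natDegree hS0, hdegS]
        exact_mod_cast hδ
      have htt := Polynomial.tendsto_atTop_of_leadingCoeff_nonneg S hdpos hlc.le
      have hev' := htt.eventually_ge_atTop 0
      rw [Filter.eventually_atTop] at hev'
      obtain ⟨x0, hx0⟩ := hev'
      obtain ⟨N, hN⟩ := exists_nat_ge x0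
      refine ⟨max N 1, le_max_right _ _, fun n hn => ?_⟩
      apply hx0
      have : (N : ℝ) ≤ (n : ℝ) := by exact_mod_cast le_trans (le_max_left N 1) hn
      linarith
  obtain ⟨M, hM1, hMev⟩ := hev
  have hS : ∀ n : ℕ, M ≤ n →
      P.eval (n : ℝ) * t ^ 2 + R.eval (n : ℝ) ≤ Q.eval (n : ℝ) * t := by
    intro n hn
    have := hMev n hn
    simp only [hSdef, Polynomial.eval_sub, Polynomial.eval_mul, Polynomial.eval_C] at this
    linarith
  -- negated solution
  have hu' : ∀ n : ℕ, 1 ≤ n →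
      P.eval (n : ℝ) * (-u (n + 1)) = Q.eval (n : ℝ) * (-u n) - R.eval (n : ℝ) * (-u (n - 1)) := by
    intro n hn
    have := hu n hn
    ring_nf
    ring_nf at this
    linarith
  by_cases hA : ∃ n, M ≤ n ∧ u n ≤ 0 ∧ 0 < u (n + 1)
  · obtain ⟨n, hn, h0, h1⟩ := hA
    refine ⟨n + 1, Or.inl ?_⟩
    exact prop_pos P Q R hPpos hRpos u hu t ht M hM1 hS n hn h1
      (le_trans (mul_nonpos_of_nonneg_of_nonpos ht.le h0) h1.le)
  by_cases hB : ∃ n, M ≤ n ∧ 0 ≤ u n ∧ u (n + 1) < 0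
  · obtain ⟨n, hn, h0, h1⟩ := hB
    refine ⟨n + 1, Or.inr ?_⟩
    have hneg := prop_pos P Q R hPpos hRpos (fun m => -u m) hu' t ht M hM1 hS n hn
      (by simpa using h1)
      (by show t * (-u n) ≤ -u (n+1)
          have : t * (-u n) ≤ 0 := mul_nonpos_of_nonneg_of_nonpos ht.le (by linarith)
          have h1' : (0:ℝ) < -u (n+1) := by linarith
          linarith)
    intro m hm
    have := hneg m hm
    simpa using this
  push_neg at hA hB
  -- sign cannot flip: build monotone sign behaviour
  have hz : ∀ n, M ≤ n → u n ≠ 0 := by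
    intro n hn h0
    have h1 : u (n + 1) ≤ 0 := hA n hn (le_of_eq h0)
    have h2 : 0 ≤ u (n + 1) := hB n hn (ge_of_eq h0)
    have h3 : u (n + 1) = 0 := le_antisymm h1 h2
    obtain ⟨m, hm⟩ := hnontriv
    exact hm (allzero_aux P Q R hPpos hRpos u hu n h0 h3 m)
  rcases lt_trichotomy (u M) 0 with hM | hM | hM
  · refine ⟨M, Or.inr ?_⟩
    intro n hn
    induction n, hn using Nat.le_induction with
    | base => exact hM
    | succ n hn ih =>
      have := hA n hn ih.le
      exact lt_of_le_of_ne this (hz (n + 1) (by omega))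
  · exact absurd hM (hz M le_rfl)
  · refine ⟨M, Or.inl ?_⟩
    intro n hn
    induction n, hn using Nat.le_induction with
    | base => exact hM
    | succ n hn ih =>
      have := hB n hn ih.le
      exact lt_of_le_of_ne this (fun h => hz (n + 1) (by omega) h.symm)
end

section
/- Let a(n), b(n), c(n) be real functions with a(n), b(n), c(n) > 0 for all integers n ≥ 1, and let (u_n)_{n≥0} be a solution of a(n)u_{n+1} = b(n)u_n − c(n)u_{n−1} (n ≥ 1). Define Q_n(λ) = a(n)λ² − b(n)λ + c(n). If there exist a positive real number λ₀ and an integer m ≥ 0 such that Q_n(λ₀) ≤ 0 for all n ≥ max(m,1) and u_{m+1} ≥ λ₀ u_m > 0, then u_n > 0 for all n ≥ m. -/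
theorem positivity_criterion
    (a b c u : ℕ → ℝ)
    (ha : ∀ n : ℕ, 1 ≤ n → 0 < a n)
    (hb : ∀ n : ℕ, 1 ≤ n → 0 < b n)
    (hc : ∀ n : ℕ, 1 ≤ n → 0 < c n)
    (hu : ∀ n : ℕ, 1 ≤ n → a n * u (n + 1) = b n * u n - c n * u (n - 1))
    (lam0 : ℝ) (hlam0 : 0 < lam0) (m : ℕ)
    (hQ : ∀ n : ℕ, max m 1 ≤ n → a n * lam0 ^ 2 - b n * lam0 + c n ≤ 0)
    (hstep : u (m + 1) ≥ lam0 * u m) (hpos : 0 < lam0 * u m) :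
    ∀ n : ℕ, m ≤ n → 0 < u n := by
  have hum : 0 < u m := by
    by_contra h
    push_neg at h
    nlinarith
  have key : ∀ n : ℕ, m ≤ n → 0 < u n ∧ lam0 * u n ≤ u (n + 1) := by
    intro n hn
    induction n, hn using Nat.le_induction with
    | base => exact ⟨hum, hstep⟩
    | succ n hn ih =>
      obtain ⟨hun, hstep'⟩ := ih
      have hun1 : 0 < u (n + 1) := lt_of_lt_of_le (by positivity) hstep'
      refine ⟨hun1, ?_⟩
      have h1 : 1 ≤ n + 1 := Nat.le_add_left 1 n
      have hrec := hu (n + 1) h1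
      simp only [Nat.add_sub_cancel] at hrec
      have hQ' := hQ (n + 1) (by omega)
      have ha' := ha (n + 1) h1
      have hb' := hb (n + 1) h1
      have hc' := hc (n + 1) h1
      have h2 : a (n + 1) * (lam0 * u (n + 1)) ≤ a (n + 1) * u (n + 1 + 1) := by
        rw [hrec]
        nlinarith [mul_le_mul_of_nonneg_right hQ' hun1.le,
          mul_le_mul_of_nonneg_left hstep' hc'.le]
      exact le_of_mul_le_mul_left h2 ha'
  exact fun n hn => (key n hn).1
end

section
/- Let (β_n)_{n≥0} and (γ_n)_{n≥1} be sequences of positive real numbers, and let J₀ be the infinite tridiagonal matrix with diagonal entries J₀(i,i) = β_i, superdiagonal entries J₀(i,i+1) = γ_{i+1}, subdiagonal entries J₀(i+1,i) = 1, and zeros elsewhere. Define sequences A and B by A(−1) = 1, A(0) = β₀, B(−1) = 0, B(0) = 1, and A(n) = β_n A(n−1) − γ_n A(n−2), B(n) = β_n B(n−1) − γ_n B(n−2) for n ≥ 1. If J₀ is totally nonnegative, then B(n) > 0 for all n ≥ 0 and the sequence (A(n)/B(n))_{n≥0} converges to a real limit. -/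
noncomputable def triD (J : ℕ → ℕ → ℝ) (m k : ℕ) : ℝ :=
  (Matrix.of fun i j : Fin k => J (m + (i:ℕ)) (m + (j:ℕ))).det

lemma tri_det_rec (β γ : ℕ → ℝ) (J : ℕ → ℕ → ℝ)
    (hJ : ∀ i j : ℕ, J i j =
      if j = i then β i
      else if j = i + 1 then γ (i + 1)
      else if i = j + 1 then 1
      else 0)
    (m k : ℕ) :
    (Matrix.of fun i j : Fin (k + 2) => J (m + (i:ℕ)) (m + (j:ℕ))).det
      = β (m + k + 1) * (Matrix.of fun i j : Fin (k + 1) => J (m + (i:ℕ)) (m + (j:ℕ))).det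
        - γ (m + k + 1) * (Matrix.of fun i j : Fin k => J (m + (i:ℕ)) (m + (j:ℕ))).det := by
  have hsa1 : (Fin.last k).castSucc.succAbove (Fin.last k) = Fin.last (k+1) := by
    rw [Fin.succAbove_of_le_castSucc] <;> simp
  have hsa2 : ∀ j : Fin k, (Fin.last k).castSucc.succAbove (j.castSucc) = j.castSucc.castSucc := by
    intro j
    rw [Fin.succAbove_of_castSucc_lt]
    simp [Fin.lt_def]
  rw [Matrix.det_succ_row _ (Fin.last (k+1))]
  rw [← Finset.add_sum_erase _ _ (Finset.mem_univ (Fin.last (k+1)))]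
  rw [Finset.sum_eq_single_of_mem (Fin.castSucc (Fin.last k))
      (by simp [Finset.mem_erase, Fin.ext_iff])]
  · simp only [Matrix.of_apply, Fin.val_last, Fin.coe_castSucc, Fin.succAbove_last]
    -- compute the two diagonal-ish entries
    have e1 : J (m + (k + 1)) (m + (k + 1)) = β (m + k + 1) := by
      rw [hJ]; simp [← add_assoc]
    have e2 : J (m + (k + 1)) (m + k) = 1 := by
      rw [hJ]
      split_ifs with h1 h2 h3
      · exact absurd h1 (by omega)
      · exact absurd h2 (by omega)
      · rfl
      · exact absurd (by omega : m + (k+1) = m + k + 1) h3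
    have s1 : ((-1 : ℝ)) ^ (k + 1 + (k + 1)) = 1 := Even.neg_one_pow ⟨k + 1, by ring⟩
    have s2 : ((-1 : ℝ)) ^ (k + 1 + k) = -1 := Odd.neg_one_pow ⟨k, by ring⟩
    have m1 : ((Matrix.of fun i j : Fin (k+2) => J (m + (i:ℕ)) (m + (j:ℕ))).submatrix
        Fin.castSucc Fin.castSucc) = Matrix.of fun i j : Fin (k+1) => J (m + (i:ℕ)) (m + (j:ℕ)) := by
      ext i j; simp
    have m2 : ((Matrix.of fun i j : Fin (k+2) => J (m + (i:ℕ)) (m + (j:ℕ))).submatrix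
        Fin.castSucc (Fin.last k).castSucc.succAbove).det
        = γ (m + k + 1) * (Matrix.of fun i j : Fin k => J (m + (i:ℕ)) (m + (j:ℕ))).det := by
      rw [Matrix.det_succ_column _ (Fin.last k)]
      rw [Finset.sum_eq_single_of_mem (Fin.last k) (Finset.mem_univ _)]
      · have e3 : J (m + k) (m + (k + 1)) = γ (m + k + 1) := by
          rw [hJ]
          split_ifs with h1 h2
          · exact absurd h1 (by omega)
          · rfl
          · exact absurd (by omega : m + (k+1) = m + k + 1) h2
          · exact absurd (by omega : m + (k+1) = m + k + 1) h2
        have s3 : ((-1 : ℝ)) ^ ((k : ℕ) + k) = 1 := Even.neg_one_pow ⟨k, by ring⟩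
        have m3 : (((Matrix.of fun i j : Fin (k+2) => J (m + (i:ℕ)) (m + (j:ℕ))).submatrix
            Fin.castSucc (Fin.last k).castSucc.succAbove).submatrix
            (Fin.last k).succAbove (Fin.last k).succAbove)
            = Matrix.of fun i j : Fin k => J (m + (i:ℕ)) (m + (j:ℕ)) := by
          ext i j
          simp [Fin.succAbove_last, hsa2]
        rw [m3]
        simp only [Matrix.submatrix_apply, Matrix.of_apply, Fin.succAbove_last, hsa1,
          Fin.coe_castSucc, Fin.val_last, e3, s3]
        ring
      · intro i _ hne
        have hi : (i : ℕ) ≠ k := by intro h; exact hne (Fin.ext (by simp [h]))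
        have e0 : J (m + (i : ℕ)) (m + (k + 1)) = 0 := by
          rw [hJ]
          have := i.isLt
          split_ifs with h1 h2 h3
          · exact absurd h1 (by omega)
          · exact absurd h2 (by omega)
          · exact absurd h3 (by omega)
          · rfl
        simp only [Matrix.submatrix_apply, Matrix.of_apply, hsa1, Fin.val_last,
          Fin.coe_castSucc, e0]
        ring
    rw [e1, e2, s1, s2, m1, m2]
    ring
  · intro c hc hne
    have hc1 : (c : ℕ) ≠ k + 1 := by
      have := Finset.ne_of_mem_erase hc
      simpa [Fin.ext_iff] using this
    have hc2 : (c : ℕ) ≠ k := by intro h; exact hne (Fin.ext (by simp [h]))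
    have : J (m + (k+1)) (m + (c:ℕ)) = 0 := by
      rw [hJ]; have hlt := c.isLt
      split_ifs with h1 h2 h3
      · exact absurd h1 (by omega)
      · exact absurd h2 (by omega)
      · exact absurd h3 (by omega)
      · rfl
    simp only [Matrix.of_apply, Fin.val_last, this]
    ring

lemma triD_zero (J : ℕ → ℕ → ℝ) (m : ℕ) : triD J m 0 = 1 := Matrix.det_fin_zero

lemma triD_one (β γ : ℕ → ℝ) (J : ℕ → ℕ → ℝ)
    (hJ : ∀ i j : ℕ, J i j =
      if j = i then β i
      else if j = i + 1 then γ (i + 1)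
      else if i = j + 1 then 1
      else 0) (m : ℕ) : triD J m 1 = β m := by
  simp [triD, Matrix.det_fin_one, hJ]

lemma triD_rec (β γ : ℕ → ℝ) (J : ℕ → ℕ → ℝ)
    (hJ : ∀ i j : ℕ, J i j =
      if j = i then β i
      else if j = i + 1 then γ (i + 1)
      else if i = j + 1 then 1
      else 0) (m k : ℕ) :
    triD J m (k + 2) = β (m + k + 1) * triD J m (k + 1) - γ (m + k + 1) * triD J m k :=
  tri_det_rec β γ J hJ m k

lemma triD_nonneg (J : ℕ → ℕ → ℝ) (hTN : IsTotallyNonneg J) (m k : ℕ) :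
    0 ≤ triD J m k := by
  cases k with
  | zero => rw [triD_zero]; norm_num
  | succ k =>
    have hmono : StrictMono (fun i : Fin (k + 1) => m + (i : ℕ)) := by
      intro a b h
      exact Nat.add_lt_add_left (Fin.lt_def.mp h) m
    exact hTN k _ _ hmono hmono


/-- Here `A (n+1)` and `B (n+1)` stand for the `n`-th partial numerator `A(n)` and
partial denominator `B(n)` of the continued fraction, i.e. indices are shifted
by one so that `A 0 = A(-1) = 1`, `B 0 = B(-1) = 0`. -/
theorem totally_nonneg_tridiagonal_continued_fraction_converges
    (β : ℕ → ℝ) (γ : ℕ → ℝ)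
    (hβ : ∀ n : ℕ, 0 < β n)
    (hγ : ∀ n : ℕ, 1 ≤ n → 0 < γ n)
    (J : ℕ → ℕ → ℝ)
    (hJ : ∀ i j : ℕ, J i j =
      if j = i then β i
      else if j = i + 1 then γ (i + 1)
      else if i = j + 1 then 1
      else 0)
    (hTN : IsTotallyNonneg J)
    (A B : ℕ → ℝ)
    (hA0 : A 0 = 1) (hA1 : A 1 = β 0)
    (hB0 : B 0 = 0) (hB1 : B 1 = 1)
    (hArec : ∀ n : ℕ, 1 ≤ n → A (n + 1) = β n * A n - γ n * A (n - 1))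
    (hBrec : ∀ n : ℕ, 1 ≤ n → B (n + 1) = β n * B n - γ n * B (n - 1)) :
    (∀ n : ℕ, 0 < B (n + 1)) ∧
      ∃ L : ℝ, Filter.Tendsto (fun n : ℕ => A (n + 1) / B (n + 1)) Filter.atTop (nhds L) := by
  -- A and B are minors of J
  have hA : ∀ n : ℕ, A n = triD J 0 n := by
    have H : ∀ n, A n = triD J 0 n ∧ A (n + 1) = triD J 0 (n + 1) := by
      intro n
      induction n with
      | zero =>
        constructor
        · rw [hA0, triD_zero]
        · rw [hA1, triD_one β γ J hJ]
      | succ n ih =>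
        refine ⟨ih.2, ?_⟩
        rw [hArec (n + 1) (by omega), triD_rec β γ J hJ 0 n]
        have h01 : (0:ℕ) + n + 1 = n + 1 := by omega
        rw [h01, Nat.add_sub_cancel, ih.1, ih.2]
    exact fun n => (H n).1
  have hB : ∀ n : ℕ, B (n + 1) = triD J 1 n := by
    have H : ∀ n, B (n + 1) = triD J 1 n ∧ B (n + 2) = triD J 1 (n + 1) := by
      intro n
      induction n with
      | zero =>
        constructor
        · rw [hB1, triD_zero]
        · rw [hBrec 1 le_rfl, triD_one β γ J hJ]
          simp [hB0, hB1]
      | succ n ih =>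
        refine ⟨ih.2, ?_⟩
        rw [hBrec (n + 2) (by omega), triD_rec β γ J hJ 1 n]
        have h12 : (1 : ℕ) + n + 1 = n + 2 := by ring
        have h21 : n + 2 - 1 = n + 1 := by omega
        rw [h12, h21, ih.1, ih.2]
    exact fun n => (H n).1
  have hAnn : ∀ n : ℕ, 0 ≤ A n := fun n => (hA n) ▸ triD_nonneg J hTN 0 n
  have hBnn : ∀ n : ℕ, 0 ≤ B (n + 1) := fun n => (hB n) ▸ triD_nonneg J hTN 1 n
  -- strict positivity of B
  have hBpos : ∀ n : ℕ, 0 < B (n + 1) := by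
    have H : ∀ n, 0 < B (n + 1) ∧ 0 < B (n + 2) := by
      intro n
      induction n with
      | zero =>
        refine ⟨by rw [hB1]; norm_num, ?_⟩
        rw [hBrec 1 le_rfl]
        simp [hB0, hB1, hβ 1]
      | succ n ih =>
        refine ⟨ih.2, ?_⟩
        rcases lt_or_eq_of_le (hBnn (n + 2)) with h | h
        · exact h
        · exfalso
          have h4 := hBnn (n + 3)
          have h31 : n + 3 - 1 = n + 2 := by omega
          rw [hBrec (n + 3) (by omega), h31, ← h] at h4
          nlinarith [hγ (n + 3) (by omega), ih.2]
    exact fun n => (H n).1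
  refine ⟨hBpos, ?_⟩
  -- the determinant identity
  have hE : ∀ n : ℕ, A (n + 1) * B n - A n * B (n + 1) < 0 := by
    intro n
    induction n with
    | zero => rw [hA0, hA1, hB0, hB1]; norm_num
    | succ n ih =>
      have hrecA := hArec (n + 1) (by omega)
      have hrecB := hBrec (n + 1) (by omega)
      simp only [Nat.add_sub_cancel] at hrecA hrecB
      have : A (n + 2) * B (n + 1) - A (n + 1) * B (n + 2)
          = γ (n + 1) * (A (n + 1) * B n - A n * B (n + 1)) := by
        rw [hrecA, hrecB]; ring
      rw [this]
      exact mul_neg_of_pos_of_neg (hγ (n + 1) (by omega)) ih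
  -- the sequence is antitone and bounded below by 0
  set f : ℕ → ℝ := fun n => A (n + 1) / B (n + 1) with hf
  have hanti : Antitone f := by
    apply antitone_nat_of_succ_le
    intro n
    have h1 := hBpos n
    have h2 := hBpos (n + 1)
    rw [hf]
    simp only
    rw [div_le_div_iff₀ h2 h1]
    nlinarith [hE (n + 1)]
  have hbdd : BddBelow (Set.range f) := by
    refine ⟨0, ?_⟩
    rintro x ⟨n, rfl⟩
    exact div_nonneg (hAnn (n + 1)) (hBnn n)
  exact ⟨_, tendsto_atTop_ciInf hanti hbdd⟩
end

section
/- Let a, b, c, a₀, b₀, c₀ be real numbers with a, b, c > 0 and an + a₀ > 0, bn + b₀ > 0, cn + c₀ > 0 for all integers n ≥ 1, and let (u_n)_{n≥0} satisfy (an + a₀)u_{n+1} = (bn + b₀)u_n − (cn + c₀)u_{n−1} for n ≥ 1. Set λ₁ = (b − √(b² − 4ac))/(2a). If b² ≥ 4ac, a₀λ₁² − b₀λ₁ + c₀ ≤ 0, and u_1 ≥ λ₁ u_0 > 0, then u_n > 0 for all n ≥ 0. -/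
theorem positivity_linear_coefficients
    (a b c a₀ b₀ c₀ : ℝ)
    (ha : 0 < a) (hb : 0 < b) (hc : 0 < c)
    (hapos : ∀ n : ℕ, 1 ≤ n → 0 < a * n + a₀)
    (hbpos : ∀ n : ℕ, 1 ≤ n → 0 < b * n + b₀)
    (hcpos : ∀ n : ℕ, 1 ≤ n → 0 < c * n + c₀)
    (u : ℕ → ℝ)
    (hu : ∀ n : ℕ, 1 ≤ n →
      (a * n + a₀) * u (n + 1) = (b * n + b₀) * u n - (c * n + c₀) * u (n - 1))
    (lam1 : ℝ) (hlam1 : lam1 = (b - Real.sqrt (b ^ 2 - 4 * a * c)) / (2 * a))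
    (hdisc : b ^ 2 ≥ 4 * a * c)
    (hQ : a₀ * lam1 ^ 2 - b₀ * lam1 + c₀ ≤ 0)
    (hstep : u 1 ≥ lam1 * u 0) (hpos : 0 < lam1 * u 0) :
    ∀ n : ℕ, 0 < u n := by
  set s := Real.sqrt (b ^ 2 - 4 * a * c) with hs_def
  have hs : s ^ 2 = b ^ 2 - 4 * a * c := Real.sq_sqrt (by linarith)
  have hsb : s < b := by
    have h1 : s < Real.sqrt (b ^ 2) := by
      apply Real.sqrt_lt_sqrt (by linarith)
      nlinarith
    rwa [Real.sqrt_sq hb.le] at h1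
  have hlpos : 0 < lam1 := by
    rw [hlam1]
    exact div_pos (by linarith) (by linarith)
  have h2a : 2 * a * lam1 = b - s := by
    rw [hlam1]; field_simp
  have hroot : a * lam1 ^ 2 - b * lam1 + c = 0 := by
    have hsq : (2 * a * lam1) ^ 2 = (b - s) ^ 2 := by rw [h2a]
    nlinarith [hsq, hs, h2a]
  have key : ∀ n : ℕ, 0 < u n ∧ lam1 * u n ≤ u (n + 1) := by
    intro n
    induction n with
    | zero =>
      constructor
      · nlinarith
      · exact hstep
    | succ n ih =>
      obtain ⟨h1, h2⟩ := ih
      have hun1 : 0 < u (n + 1) := lt_of_lt_of_le (mul_pos hlpos h1) h2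
      refine ⟨hun1, ?_⟩
      have hrec := hu (n + 1) (by omega)
      simp only [Nat.add_sub_cancel] at hrec
      push_cast at hrec
      have hA : (0:ℝ) < a * ((n:ℝ) + 1) + a₀ := by
        have := hapos (n + 1) (by omega); push_cast at this; exact this
      have hC : (0:ℝ) < c * ((n:ℝ) + 1) + c₀ := by
        have := hcpos (n + 1) (by omega); push_cast at this; exact this
      have hn0 : (0:ℝ) ≤ (n:ℝ) + 1 := by positivity
      have hzero : ((n:ℝ) + 1) * (a * lam1 ^ 2 - b * lam1 + c) = 0 := by
        rw [hroot]; ring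
      have hkey : (a * ((n:ℝ) + 1) + a₀) * lam1 ^ 2 - (b * ((n:ℝ) + 1) + b₀) * lam1
          + (c * ((n:ℝ) + 1) + c₀) ≤ 0 := by nlinarith [hzero, hQ]
      have hint1 := mul_le_mul_of_nonneg_right hkey hun1.le
      have hint2 := mul_le_mul_of_nonneg_left
        (mul_le_mul_of_nonneg_left h2 hC.le) hlpos.le
      have hrecl : lam1 * ((a * ((n:ℝ) + 1) + a₀) * u (n + 1 + 1))
          = lam1 * ((b * ((n:ℝ) + 1) + b₀) * u (n + 1) - (c * ((n:ℝ) + 1) + c₀) * u n) := by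
        rw [hrec]
      have H : (lam1 * (a * ((n:ℝ) + 1) + a₀)) * (lam1 * u (n + 1))
          ≤ (lam1 * (a * ((n:ℝ) + 1) + a₀)) * u (n + 1 + 1) := by
        nlinarith [hint1, hint2, hrecl]
      exact le_of_mul_le_mul_left H (by positivity)
  exact fun n => (key n).1
end

section
/- Let a, b, c be positive real numbers and let (u_n)_{n≥0} satisfy a·u_{n+1} = b·u_n − c·u_{n−1} for all n ≥ 1. Then u_n > 0 for all n ≥ 0 if and only if b² ≥ 4ac and u_1 ≥ λ₁ u_0 > 0, where λ₁ = (b − √(b² − 4ac))/(2a). -/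
/-- Descent engine: if all `u n > 0` and the quadratic `a r^2 - b r + c` is
uniformly ≥ δ > 0 on `(0, u 1 / u 0]`, we get a contradiction. -/
lemma descent_aux (a b c : ℝ) (ha : 0 < a)
    (u : ℕ → ℝ)
    (hu : ∀ n : ℕ, 1 ≤ n → a * u (n + 1) = b * u n - c * u (n - 1))
    (hpos : ∀ n : ℕ, 0 < u n)
    (δ : ℝ) (hδ : 0 < δ)
    (H : ∀ r : ℝ, 0 < r → r ≤ u 1 / u 0 → δ ≤ a * r ^ 2 - b * r + c) : False := by
  set r : ℕ → ℝ := fun n => u (n + 1) / u n with hr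
  have hrpos : ∀ n, 0 < r n := fun n => div_pos (hpos (n + 1)) (hpos n)
  have hstep : ∀ m : ℕ, a * r m * r (m + 1) = b * r m - c := by
    intro m
    have h := hu (m + 1) (by omega)
    simp only [Nat.add_sub_cancel] at h
    have h0 : u m ≠ 0 := (hpos m).ne'
    have h1 : u (m + 1) ≠ 0 := (hpos (m + 1)).ne'
    simp only [hr]
    field_simp
    linear_combination h
  set η : ℝ := δ / (a * r 0) with hη
  have hηpos : 0 < η := div_pos hδ (mul_pos ha (hrpos 0))
  have hinv : ∀ n : ℕ, r n ≤ r 0 - n * η := by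
    intro n
    induction n with
    | zero => simp
    | succ n ih =>
      have hle : r n ≤ r 0 := by
        have : (0:ℝ) ≤ n * η := by positivity
        linarith
      have hq := H (r n) (hrpos n) hle
      have hs := hstep n
      -- a * r n * (r n - r (n+1)) = a * r n ^2 - b * r n + c ≥ δ
      have hdrop : δ ≤ a * r n * (r n - r (n + 1)) := by nlinarith
      have hdroppos : 0 < r n - r (n + 1) := by nlinarith [mul_pos ha (hrpos n)]
      have hdrop2 : δ ≤ a * r 0 * (r n - r (n + 1)) := by nlinarith [hrpos n]
      have : η ≤ r n - r (n + 1) := by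
        rw [hη, div_le_iff₀ (mul_pos ha (hrpos 0))]
        linarith [hdrop2]
      push_cast
      linarith [ih]
  obtain ⟨N, hN⟩ := exists_nat_gt (r 0 / η)
  have h1 : r 0 / η < N := hN
  have h2 : r 0 < N * η := by
    rw [div_lt_iff₀ hηpos] at h1; linarith
  have := hinv N
  have := hrpos N
  linarith

theorem positivity_constant_coefficients_iff
    (a b c : ℝ) (ha : 0 < a) (hb : 0 < b) (hc : 0 < c)
    (u : ℕ → ℝ)
    (hu : ∀ n : ℕ, 1 ≤ n → a * u (n + 1) = b * u n - c * u (n - 1))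
    (lam1 : ℝ) (hlam1 : lam1 = (b - Real.sqrt (b ^ 2 - 4 * a * c)) / (2 * a)) :
    (∀ n : ℕ, 0 < u n) ↔ (b ^ 2 ≥ 4 * a * c ∧ u 1 ≥ lam1 * u 0 ∧ 0 < lam1 * u 0) := by
  constructor
  · intro hpos
    -- Part 1: b^2 ≥ 4ac
    have h4ac : b ^ 2 ≥ 4 * a * c := by
      by_contra h
      push_neg at h
      have hδ : 0 < c - b ^ 2 / (4 * a) := by
        rw [sub_pos, div_lt_iff₀ (by linarith : (0:ℝ) < 4 * a)]
        nlinarith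
      exact descent_aux a b c ha u hu hpos _ hδ (by
        intro r _ _
        have h2 : 0 ≤ (2 * a * r - b) ^ 2 := sq_nonneg _
        have hD : b ^ 2 / (4 * a) * (4 * a) = b ^ 2 :=
          div_mul_cancel₀ _ (by linarith : (4:ℝ) * a ≠ 0)
        nlinarith [hD, sq_nonneg (2 * a * r - b)])
    set s : ℝ := Real.sqrt (b ^ 2 - 4 * a * c) with hs
    have hs2 : s ^ 2 = b ^ 2 - 4 * a * c := Real.sq_sqrt (by linarith)
    have hs0 : 0 ≤ s := Real.sqrt_nonneg _
    have hsb : s < b := by nlinarith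
    have hl1pos : 0 < lam1 := by
      rw [hlam1]; exact div_pos (by linarith) (by linarith)
    refine ⟨h4ac, ?_, mul_pos hl1pos (hpos 0)⟩
    -- Part 2: u 1 ≥ lam1 * u 0
    by_contra hlt
    push_neg at hlt
    set lam2 : ℝ := (b + s) / (2 * a) with hlam2
    have hl12 : lam1 ≤ lam2 := by
      rw [hlam1, hlam2]
      apply div_le_div_of_nonneg_right ?_ (by linarith)
      linarith
    set r0 : ℝ := u 1 / u 0 with hr0
    have hr0pos : 0 < r0 := div_pos (hpos 1) (hpos 0)
    have hr0lt : r0 < lam1 := by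
      rw [hr0, div_lt_iff₀ (hpos 0)]
      linarith [hlt]
    have key : ∀ r : ℝ, a * r ^ 2 - b * r + c = a * (lam1 - r) * (lam2 - r) := by
      intro r
      rw [hlam1, hlam2]
      field_simp
      linear_combination hs2
    have hδ : 0 < a * (lam1 - r0) * (lam2 - r0) :=
      mul_pos (mul_pos ha (by linarith)) (by linarith)
    exact descent_aux a b c ha u hu hpos _ hδ (by
      intro r hr hrle
      rw [key r]
      have hrle' : r ≤ r0 := by rw [hr0]; exact hrle
      have h1 : lam1 - r0 ≤ lam1 - r := by linarith
      have h2 : lam2 - r0 ≤ lam2 - r := by linarith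
      have h3 : 0 < lam1 - r0 := by linarith
      have h4 : 0 < lam2 - r0 := by linarith
      have h5 : (lam1 - r0) * (lam2 - r0) ≤ (lam1 - r) * (lam2 - r) :=
        mul_le_mul h1 h2 h4.le (by linarith)
      calc a * (lam1 - r0) * (lam2 - r0) = a * ((lam1 - r0) * (lam2 - r0)) := by ring
        _ ≤ a * ((lam1 - r) * (lam2 - r)) := by
            exact mul_le_mul_of_nonneg_left h5 ha.le
        _ = a * (lam1 - r) * (lam2 - r) := by ring)
  · rintro ⟨h4ac, h1, h0⟩
    have hs2 : Real.sqrt (b ^ 2 - 4 * a * c) ^ 2 = b ^ 2 - 4 * a * c :=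
      Real.sq_sqrt (by linarith)
    have hs0 : 0 ≤ Real.sqrt (b ^ 2 - 4 * a * c) := Real.sqrt_nonneg _
    have hsb : Real.sqrt (b ^ 2 - 4 * a * c) < b := by nlinarith
    have hl1pos : 0 < lam1 := by
      rw [hlam1]; exact div_pos (by linarith) (by linarith)
    have hu0 : 0 < u 0 := by
      by_contra h
      push_neg at h
      nlinarith
    have hroot : a * lam1 ^ 2 - b * lam1 + c = 0 := by
      rw [hlam1]
      field_simp
      rw [show b ^ 2 - a * 4 * c = b ^ 2 - 4 * a * c by ring]
      linear_combination hs2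
    have key : ∀ n : ℕ, 0 < u n ∧ lam1 * u n ≤ u (n + 1) := by
      intro n
      induction n with
      | zero => exact ⟨hu0, h1⟩
      | succ n ih =>
        obtain ⟨ihp, ihr⟩ := ih
        have hp1 : 0 < u (n + 1) := lt_of_lt_of_le (mul_pos hl1pos ihp) ihr
        refine ⟨hp1, ?_⟩
        have hrec := hu (n + 1) (by omega)
        simp only [Nat.add_sub_cancel] at hrec
        -- lam1 * (a * u (n+2)) = lam1*b*u(n+1) - lam1*c*u n ≥ (lam1*b - c)*u(n+1)
        --                      = a*lam1^2*u(n+1)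
        have hmul : c * (lam1 * u n) ≤ c * u (n + 1) :=
          mul_le_mul_of_nonneg_left ihr hc.le
        nlinarith [mul_pos ha hl1pos, mul_pos hl1pos hp1]
    exact fun n => (key n).1
end

section
/- Let b, c be positive real numbers and let (u_n)_{n≥0} be defined by u_0 = 1, u_1 = b, and u_{n+1} = b·u_n − c·u_{n−1} for n ≥ 1 (so that 1/(1 − bx + cx²) = Σ_{n≥0} u_n xⁿ). Then u_n > 0 for all n ≥ 0 if and only if b² ≥ 4c. -/
theorem positivity_rational_function_coefficients
    (b c : ℝ) (hb : 0 < b) (hc : 0 < c)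
    (u : ℕ → ℝ) (h0 : u 0 = 1) (h1 : u 1 = b)
    (hu : ∀ n : ℕ, 1 ≤ n → u (n + 1) = b * u n - c * u (n - 1)) :
    (∀ n : ℕ, 0 < u n) ↔ b ^ 2 ≥ 4 * c := by
  constructor
  · intro hpos
    by_contra hlt
    push_neg at hlt
    obtain ⟨δ, hδpos, hcδ⟩ : ∃ δ : ℝ, 0 < δ ∧ c = δ + b ^ 2 / 4 :=
      ⟨c - b ^ 2 / 4, by linarith, by ring⟩
    have key : ∀ n : ℕ, b * u (n + 1) ≤ (b ^ 2 - n * δ) * u n := by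
      intro n
      induction n with
      | zero => simp [h0, h1]; nlinarith
      | succ n ih =>
        have hr := hu (n + 1) (by omega)
        simp only [Nat.add_sub_cancel] at hr
        have hun := hpos n
        have hun1 := hpos (n + 1)
        have ht : 0 < b ^ 2 - n * δ := by
          nlinarith
        have hnδ : (0:ℝ) ≤ (n:ℝ) * δ := by positivity
        have h2 : (n + 1 : ℝ) * δ * (b * u (n + 1)) ≤ (n + 1 : ℝ) * δ * ((b ^ 2 - n * δ) * u n) := by
          have : (0:ℝ) ≤ (n + 1 : ℝ) * δ := by positivity
          exact mul_le_mul_of_nonneg_left ih this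
        have hbound : ((n:ℝ) + 1) * δ * (b ^ 2 - n * δ) ≤ b ^ 2 * c := by
          nlinarith [sq_nonneg (b ^ 2 - 2 * (n:ℝ) * δ), mul_nonneg hnδ hδpos.le, hcδ]
        rw [hr]
        push_cast
        nlinarith [mul_le_mul_of_nonneg_right hbound hun.le]
    obtain ⟨n, hn⟩ := exists_nat_gt (b ^ 2 / δ)
    have h1' := key n
    have hun := hpos n
    have hun1 := hpos (n + 1)
    have : b ^ 2 - n * δ < 0 := by
      rw [sub_neg]
      calc b ^ 2 = (b ^ 2 / δ) * δ := by field_simp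
      _ < n * δ := by exact mul_lt_mul_of_pos_right hn hδpos
    nlinarith
  · intro hge
    have key : ∀ n : ℕ, 0 < u n ∧ b * u n ≤ 2 * u (n + 1) := by
      intro n
      induction n with
      | zero => constructor <;> simp [h0, h1] <;> linarith
      | succ n ih =>
        obtain ⟨ihp, ihr⟩ := ih
        have hun1 : 0 < u (n + 1) := by nlinarith
        refine ⟨hun1, ?_⟩
        have hr := hu (n + 1) (by omega)
        simp only [Nat.add_sub_cancel] at hr
        rw [hr]
        nlinarith
    exact fun n => (key n).1
end

section
/- Let b, c, d be positive real numbers and let (u_n)_{n≥0} be defined by u_0 = 1, u_1 = b − d, and u_{n+1} = b·u_n − c·u_{n−1} for n ≥ 1 (so that (1 − dx)/(1 − bx + cx²) = Σ_{n≥0} u_n xⁿ). Then u_n > 0 for all n ≥ 1 if and only if b² ≥ 4c and d ≤ (b + √(b² − 4c))/2. -/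
/-- Descent lemma: a positive sequence satisfying `t (n+1) * t n = b * t n - c`
whose quadratic `x² - bx + c` is uniformly bounded below by `e * t 0` on `(0, t 0]`
cannot exist when `e > 0`. -/
lemma descent_aux_s10 (b c e : ℝ) (t : ℕ → ℝ) (ht : ∀ n, 0 < t n)
    (hrec : ∀ n, t (n + 1) * t n = b * t n - c) (he : 0 < e)
    (hq : ∀ x : ℝ, 0 < x → x ≤ t 0 → e * t 0 ≤ x ^ 2 - b * x + c) : False := by
  have ht0 := ht 0
  have key : ∀ n : ℕ, t n ≤ t 0 - n * e := by
    intro n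
    induction n with
    | zero => simp
    | succ n ih =>
      have htn := ht n
      have hle : t n ≤ t 0 := le_trans ih (by nlinarith)
      have h1 : e * t 0 ≤ (t n) ^ 2 - b * (t n) + c := hq _ htn hle
      have h2 := hrec n
      have h3 : t (n + 1) * t n ≤ (t n - e) * t n := by nlinarith
      have h4 : t (n + 1) ≤ t n - e := le_of_mul_le_mul_right h3 htn
      have : (n : ℝ) + 1 = ((n : ℕ) + 1 : ℕ) := by push_cast; ring
      push_cast
      linarith
  obtain ⟨n, hn⟩ := exists_nat_gt (t 0 / e)
  have hne : t 0 < n * e := by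
    have := (div_lt_iff₀ he).mp hn
    linarith
  have := key n
  have := ht n
  linarith

theorem positivity_rational_function_coefficients_with_numerator
    (b c d : ℝ) (hb : 0 < b) (hc : 0 < c) (hd : 0 < d)
    (u : ℕ → ℝ) (h0 : u 0 = 1) (h1 : u 1 = b - d)
    (hu : ∀ n : ℕ, 1 ≤ n → u (n + 1) = b * u n - c * u (n - 1)) :
    (∀ n : ℕ, 1 ≤ n → 0 < u n) ↔
      (b ^ 2 ≥ 4 * c ∧ d ≤ (b + Real.sqrt (b ^ 2 - 4 * c)) / 2) := by
  have hrec2 : ∀ n : ℕ, u (n + 2) = b * u (n + 1) - c * u n := by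
    intro n
    have := hu (n + 1) (by omega)
    simpa using this
  constructor
  · -- forward direction
    intro hpos
    have hupos : ∀ n, 0 < u n := by
      intro n
      cases n with
      | zero => rw [h0]; norm_num
      | succ m => exact hpos (m + 1) (by omega)
    set t : ℕ → ℝ := fun n => u (n + 1) / u n with hT
    have htpos : ∀ n, 0 < t n := fun n => div_pos (hupos (n + 1)) (hupos n)
    have ht0 : t 0 = b - d := by simp [hT, h0, h1]
    have htrec : ∀ n, t (n + 1) * t n = b * t n - c := by
      intro n
      have hn0 := (hupos n).ne'
      have hn1 := (hupos (n + 1)).ne'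
      simp only [hT]
      field_simp
      rw [hrec2 n]
      ring
    -- step 1: b² ≥ 4c
    have hbc : b ^ 2 ≥ 4 * c := by
      by_contra hlt
      push_neg at hlt
      have ht0p := htpos 0
      refine descent_aux_s10 b c ((c - b ^ 2 / 4) / t 0) t htpos htrec
        (div_pos (by linarith) ht0p) ?_
      intro x hx hxle
      have he : (c - b ^ 2 / 4) / t 0 * t 0 = c - b ^ 2 / 4 := by
        field_simp
      rw [he]
      nlinarith [sq_nonneg (x - b / 2)]
    refine ⟨hbc, ?_⟩
    -- step 2: d ≤ r
    set q := Real.sqrt (b ^ 2 - 4 * c) with hq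
    have hq0 : 0 ≤ q := Real.sqrt_nonneg _
    have hq2 : q ^ 2 = b ^ 2 - 4 * c := Real.sq_sqrt (by linarith)
    have hqb : q < b := by nlinarith
    by_contra hdr
    push_neg at hdr
    -- d > (b + q)/2
    set s := (b - q) / 2 with hs
    set r := (b + q) / 2 with hr
    have hs0 : 0 < s := by simp [hs]; linarith
    have hsr : s ≤ r := by simp [hs, hr]; linarith
    have hsrb : s + r = b := by simp [hs, hr]; ring
    have hsrc : s * r = c := by
      simp [hs, hr]
      nlinarith
    have ht0p := htpos 0
    have ht0s : t 0 < s := by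
      rw [ht0]
      simp [hs]
      linarith [hdr]
    refine descent_aux_s10 b c ((s - t 0) ^ 2 / t 0) t htpos htrec
      (div_pos (pow_pos (by linarith) 2) ht0p) ?_
    intro x hx hxle
    have he : (s - t 0) ^ 2 / t 0 * t 0 = (s - t 0) ^ 2 := by field_simp
    rw [he]
    have h1 : s - t 0 ≤ s - x := by linarith
    have h2 : s - x ≤ r - x := by linarith
    have h3 : 0 < s - t 0 := by linarith
    have : (s - t 0) ^ 2 ≤ (s - x) * (r - x) := by nlinarith
    nlinarith
  · -- backward direction
    rintro ⟨hbc, hdle⟩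
    set q := Real.sqrt (b ^ 2 - 4 * c) with hq
    have hq0 : 0 ≤ q := Real.sqrt_nonneg _
    have hq2 : q ^ 2 = b ^ 2 - 4 * c := Real.sq_sqrt (by linarith)
    have hqb : q < b := by nlinarith
    set s := (b - q) / 2 with hs
    set r := (b + q) / 2 with hr
    have hs0 : 0 < s := by simp [hs]; linarith
    have hr0 : 0 < r := by simp [hr]; linarith
    have hsrb : s + r = b := by simp [hs, hr]; ring
    have hsrc : s * r = c := by simp [hs, hr]; nlinarith
    have hdr : d ≤ r := hdle
    have key : ∀ n : ℕ, u (n + 1) = s * u n + r ^ n * (r - d) := by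
      intro n
      induction n with
      | zero =>
        rw [h0, h1, pow_zero]
        linarith [hsrb]
      | succ n ih =>
        have h2 := hrec2 n
        rw [h2]
        have hb' : b = s + r := hsrb.symm
        have hc' : c = s * r := hsrc.symm
        rw [hb', hc']
        rw [ih]
        ring
    have hupos : ∀ n, 0 < u n := by
      intro n
      induction n with
      | zero => rw [h0]; norm_num
      | succ n ih =>
        rw [key n]
        have hA : 0 < s * u n := mul_pos hs0 ih
        have hrn : 0 < r ^ n := pow_pos hr0 n
        have hB : 0 ≤ r ^ n * (r - d) := mul_nonneg hrn.le (by linarith)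
        linarith
    intro n _
    exact hupos n
end

section
/- Let a be a real number and let (u_n)_{n≥0} be defined by u_0 = 1, u_1 = 2 − a, and (n+1)u_{n+1} = (2 − a)(2n+1)u_n − a²n·u_{n−1} for n ≥ 1. Then u_n > 0 for all n ≥ 0 if and only if a ≤ 1. -/
set_option maxHeartbeats 1000000 in
theorem positivity_diagonal_coefficients_iff
    (a : ℝ) (u : ℕ → ℝ) (h0 : u 0 = 1) (h1 : u 1 = 2 - a)
    (hu : ∀ n : ℕ, 1 ≤ n →
      ((n : ℝ) + 1) * u (n + 1) = (2 - a) * (2 * n + 1) * u n - a ^ 2 * n * u (n - 1)) :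
    (∀ n : ℕ, 0 < u n) ↔ a ≤ 1 := by
  have hrec : ∀ m : ℕ, ((m : ℝ) + 2) * u (m + 2) =
      (2 - a) * (2 * m + 3) * u (m + 1) - a ^ 2 * (m + 1) * u m := by
    intro m
    have := hu (m + 1) (by omega)
    have hm : (m : ℕ) + 1 - 1 = m := by omega
    rw [hm] at this
    push_cast at this
    push_cast
    linarith
  constructor
  · intro hpos
    by_contra hca
    push_neg at hca
    have ha2 : a < 2 := by
      by_contra h; push_neg at h
      have := hpos 1; rw [h1] at this; linarith
    have ha0 : 0 < a := by linarith
    set x : ℝ := (2 - a) / a with hxdef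
    have hxa : x * a = 2 - a := div_mul_cancel₀ _ (ne_of_gt ha0)
    have hx0 : 0 < x := div_pos (by linarith) ha0
    have hx1 : x < 1 := by rw [hxdef, div_lt_one ha0]; linarith
    -- Fact 1 (AM-GM on the recurrence)
    have hF1 : ∀ m : ℕ, 4 * ((m : ℝ) + 2) * ((m : ℝ) + 1) * a ^ 2 * u (m + 2) * u m ≤
        (2 - a) ^ 2 * (2 * (m : ℝ) + 3) ^ 2 * (u (m + 1)) ^ 2 := by
      intro m
      have h' : ((2 - a) * (2 * (m : ℝ) + 3) * u (m + 1)) ^ 2 =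
          (((m : ℝ) + 2) * u (m + 2) + a ^ 2 * ((m : ℝ) + 1) * u m) ^ 2 := by
        rw [show (2 - a) * (2 * (m : ℝ) + 3) * u (m + 1) =
          ((m : ℝ) + 2) * u (m + 2) + a ^ 2 * ((m : ℝ) + 1) * u m from by
            have := hrec m; linarith]
      nlinarith [h', sq_nonneg (((m : ℝ) + 2) * u (m + 2) - a ^ 2 * ((m : ℝ) + 1) * u m)]
    -- Main claim by induction
    have claim : ∀ n : ℕ, u (n + 1) ≤
        (3 / 2 - 1 / (2 * ((n : ℝ) + 1))) * x ^ (2 * n + 1) * a * u n := by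
      intro n
      induction n with
      | zero =>
        norm_num [h0, h1]
        linarith [hxa]
      | succ n IH =>
        have hun : 0 < u n := hpos n
        have hun1 : 0 < u (n + 1) := hpos (n + 1)
        have hun2 : 0 < u (n + 2) := hpos (n + 2)
        have hF := hF1 n
        set B : ℝ := 3 / 2 - 1 / (2 * ((n : ℝ) + 1)) with hB
        have hn0 : (0:ℝ) ≤ (n : ℝ) := Nat.cast_nonneg n
        have hBpos : 0 < B := by
          rw [hB]
          have h1' : 1 / (2 * ((n : ℝ) + 1)) ≤ 1 / 2 := by
            apply div_le_div_of_nonneg_left (by norm_num) (by norm_num)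
            nlinarith
          linarith
        have hsq : (u (n + 1)) ^ 2 ≤ u (n + 1) * (B * x ^ (2 * n + 1) * a * u n) := by
          nlinarith [IH]
        have hx2 : (2 - a) ^ 2 = x ^ 2 * a ^ 2 := by
          have h' : (x * a) ^ 2 = (2 - a) ^ 2 := by rw [hxa]
          nlinarith [h']
        have hcomb : 4 * ((n : ℝ) + 2) * ((n : ℝ) + 1) * a ^ 2 * u (n + 2) * u n ≤
            ((2 * (n : ℝ) + 3) ^ 2 * B) *
              (a ^ 2 * x ^ (2 * n + 3) * a * u (n + 1) * u n) := by
          have epow : x ^ (2 * n + 3) = x ^ 2 * x ^ (2 * n + 1) := by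
            rw [show 2 * n + 3 = 2 + (2 * n + 1) from by omega, pow_add]
          calc 4 * ((n : ℝ) + 2) * ((n : ℝ) + 1) * a ^ 2 * u (n + 2) * u n
              ≤ (2 - a) ^ 2 * (2 * (n : ℝ) + 3) ^ 2 * (u (n + 1)) ^ 2 := hF
            _ = x ^ 2 * a ^ 2 * (2 * (n : ℝ) + 3) ^ 2 * (u (n + 1)) ^ 2 := by rw [hx2]
            _ ≤ x ^ 2 * a ^ 2 * (2 * (n : ℝ) + 3) ^ 2 *
                (u (n + 1) * (B * x ^ (2 * n + 1) * a * u n)) := by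
                apply mul_le_mul_of_nonneg_left hsq; positivity
            _ = ((2 * (n : ℝ) + 3) ^ 2 * B) *
                (a ^ 2 * x ^ (2 * n + 3) * a * u (n + 1) * u n) := by
                rw [epow]; ring
        have hkey : (2 * (n : ℝ) + 3) ^ 2 * B ≤
            4 * ((n : ℝ) + 1) * ((n : ℝ) + 2) * (3 / 2 - 1 / (2 * ((n : ℝ) + 2))) := by
          have eB1 : B = (3 * (n : ℝ) + 2) / (2 * ((n : ℝ) + 1)) := by
            rw [hB]; field_simp; ring
          have eB2 : (3:ℝ) / 2 - 1 / (2 * ((n : ℝ) + 2)) =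
              (3 * (n : ℝ) + 5) / (2 * ((n : ℝ) + 2)) := by
            field_simp; ring
          rw [eB1, eB2, ← mul_div_assoc, ← mul_div_assoc,
            div_le_div_iff₀ (by positivity) (by positivity)]
          nlinarith [hn0, sq_nonneg ((n : ℝ) + 2)]
        have step : 4 * ((n : ℝ) + 2) * ((n : ℝ) + 1) * a ^ 2 * u (n + 2) * u n ≤
            (4 * ((n : ℝ) + 1) * ((n : ℝ) + 2) * (3 / 2 - 1 / (2 * ((n : ℝ) + 2)))) *
              (a ^ 2 * x ^ (2 * n + 3) * a * u (n + 1) * u n) :=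
          le_trans hcomb (mul_le_mul_of_nonneg_right hkey (by positivity))
        have hfin : u (n + 2) ≤
            (3 / 2 - 1 / (2 * ((n : ℝ) + 2))) * x ^ (2 * n + 3) * a * u (n + 1) := by
          have h4 : (0:ℝ) < 4 * ((n : ℝ) + 1) * ((n : ℝ) + 2) * (a ^ 2 * u n) := by positivity
          have e1 : 4 * ((n : ℝ) + 2) * ((n : ℝ) + 1) * a ^ 2 * u (n + 2) * u n =
              (4 * ((n : ℝ) + 1) * ((n : ℝ) + 2) * (a ^ 2 * u n)) * u (n + 2) := by ring
          have e2 : (4 * ((n : ℝ) + 1) * ((n : ℝ) + 2) * (3 / 2 - 1 / (2 * ((n : ℝ) + 2)))) *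
              (a ^ 2 * x ^ (2 * n + 3) * a * u (n + 1) * u n) =
              (4 * ((n : ℝ) + 1) * ((n : ℝ) + 2) * (a ^ 2 * u n)) *
                ((3 / 2 - 1 / (2 * ((n : ℝ) + 2))) * x ^ (2 * n + 3) * a * u (n + 1)) := by ring
          rw [e1, e2] at step
          exact le_of_mul_le_mul_left step h4
        have ec : ((n + 1 : ℕ) : ℝ) = (n : ℝ) + 1 := by push_cast; ring
        rw [ec, show 2 * (n + 1) + 1 = 2 * n + 3 from by omega,
          show (n : ℝ) + 1 + 1 = (n : ℝ) + 2 from by ring]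
        exact hfin
    -- Fact 2: lower bound giving x^{2m+2} > 2/9
    have hlow : ∀ m : ℕ, 2 / 9 < x ^ (2 * m + 2) := by
      intro m
      have hun : 0 < u m := hpos m
      have hun2 : 0 < u (m + 2) := hpos (m + 2)
      have hr := hrec m
      have hc := claim m
      have hm0 : (0:ℝ) ≤ (m : ℝ) := Nat.cast_nonneg m
      have hB2 : (3 / 2 - 1 / (2 * ((m : ℝ) + 1))) ≤ 3 / 2 := by
        have hd : 0 < 1 / (2 * ((m : ℝ) + 1)) := by positivity
        linarith
      have h2 : a ^ 2 * ((m : ℝ) + 1) * u m < (2 - a) * (2 * (m : ℝ) + 3) * u (m + 1) := by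
        nlinarith [hun2, hr]
      have h3 : (2 - a) * (2 * (m : ℝ) + 3) * u (m + 1) ≤
          (2 - a) * (2 * (m : ℝ) + 3) * ((3 / 2) * x ^ (2 * m + 1) * a * u m) := by
        apply mul_le_mul_of_nonneg_left _ (by nlinarith)
        calc u (m + 1) ≤ (3 / 2 - 1 / (2 * ((m : ℝ) + 1))) * x ^ (2 * m + 1) * a * u m := hc
          _ ≤ (3 / 2) * x ^ (2 * m + 1) * a * u m := by
              apply mul_le_mul_of_nonneg_right _ hun.le
              apply mul_le_mul_of_nonneg_right _ ha0.le
              apply mul_le_mul_of_nonneg_right hB2 (by positivity)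
      have h23 := lt_of_lt_of_le h2 h3
      have e : (2 - a) * (2 * (m : ℝ) + 3) * ((3 / 2) * x ^ (2 * m + 1) * a * u m) =
          (3 / 2) * (2 * (m : ℝ) + 3) * a ^ 2 * x ^ (2 * m + 2) * u m := by
        rw [← hxa, show 2 * m + 2 = (2 * m + 1) + 1 from by omega, pow_succ]
        ring
      rw [e] at h23
      have h5 : ((m : ℝ) + 1) < (3 / 2) * (2 * (m : ℝ) + 3) * x ^ (2 * m + 2) := by
        have ha2' : (0:ℝ) < a ^ 2 := by positivity
        have e1 : a ^ 2 * ((m : ℝ) + 1) * u m = (a ^ 2 * u m) * ((m : ℝ) + 1) := by ring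
        have e2 : (3 / 2) * (2 * (m : ℝ) + 3) * a ^ 2 * x ^ (2 * m + 2) * u m =
            (a ^ 2 * u m) * ((3 / 2) * (2 * (m : ℝ) + 3) * x ^ (2 * m + 2)) := by ring
        rw [e1, e2] at h23
        exact lt_of_mul_lt_mul_left h23 (by positivity)
      nlinarith [h5, hm0, pow_nonneg hx0.le (2 * m + 2)]
    obtain ⟨N, hN⟩ := exists_pow_lt_of_lt_one (show (0:ℝ) < 2 / 9 by norm_num) hx1
    have h6 : x ^ (2 * N + 2) ≤ x ^ N :=
      pow_le_pow_of_le_one hx0.le hx1.le (by omega)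
    have := hlow N
    linarith
  · intro ha
    have key : ∀ n : ℕ, 0 < u n ∧ (2 - a) * u n ≤ u (n + 1) := by
      intro n
      induction n with
      | zero => rw [h0, h1]; norm_num
      | succ n IH =>
        obtain ⟨hp, hle⟩ := IH
        have h2a : (1:ℝ) ≤ 2 - a := by linarith
        have hp1 : 0 < u (n + 1) := by nlinarith
        refine ⟨hp1, ?_⟩
        have hr := hrec n
        have h' : (2 - a) * ((2 - a) * u n) ≤ (2 - a) * u (n + 1) :=
          mul_le_mul_of_nonneg_left hle (by linarith)
        have hsq : a ^ 2 ≤ (2 - a) ^ 2 := by nlinarith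
        have hn0 : (0:ℝ) ≤ (n : ℝ) := Nat.cast_nonneg n
        nlinarith [mul_le_mul_of_nonneg_left h' (by linarith : (0:ℝ) ≤ (n : ℝ) + 1),
          mul_le_mul_of_nonneg_left (mul_le_mul_of_nonneg_left hsq hp.le)
            (by linarith : (0:ℝ) ≤ (n : ℝ) + 1)]
    exact fun n => (key n).1
end

section
/- Let (s_n)_{n≥0} be defined by s_0 = 1, s_1 = 12, and 2(n+1)²s_{n+1} = 3(27n² + 27n + 8)s_n − 81(3n − 1)(3n + 1)s_{n−1} for n ≥ 1. Then s_n > 0 for all n ≥ 0. -/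
theorem szego_diagonal_positive
    (s : ℕ → ℝ) (h0 : s 0 = 1) (h1 : s 1 = 12)
    (hs : ∀ n : ℕ, 1 ≤ n →
      2 * ((n : ℝ) + 1) ^ 2 * s (n + 1) =
        3 * (27 * n ^ 2 + 27 * n + 8) * s n - 81 * (3 * n - 1) * (3 * n + 1) * s (n - 1)) :
    ∀ n : ℕ, 0 < s n := by
  have key : ∀ n : ℕ, 1 ≤ n → 0 < s n ∧ 27 / 2 * s n ≤ s (n + 1) := by
    intro n hn
    induction n, hn using Nat.le_induction with
    | base =>
      have h2 := hs 1 (le_refl 1)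
      norm_num [h0, h1] at h2
      constructor
      · rw [h1]; norm_num
      · rw [h1]; nlinarith [h2]
    | succ n hn ih =>
      obtain ⟨hpos, hrat⟩ := ih
      have hpos' : 0 < s (n + 1) := lt_of_lt_of_le (by positivity) hrat
      have hrec := hs (n + 1) (by omega)
      have hsub : n + 1 - 1 = n := rfl
      rw [hsub] at hrec
      push_cast at hrec
      refine ⟨hpos', ?_⟩
      have hB : (0 : ℝ) ≤ 81 * (3 * (n : ℝ) + 2) * (3 * (n : ℝ) + 4) := by positivity
      have hBmul := mul_le_mul_of_nonneg_left hrat hB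
      have hn0 : (0 : ℝ) ≤ (n : ℝ) := Nat.cast_nonneg n
      nlinarith [hrec, hBmul, hpos'.le, mul_nonneg hn0 hpos'.le, sq_nonneg ((n : ℝ) + 2)]
  intro n
  match n with
  | 0 => rw [h0]; norm_num
  | (m + 1) => exact (key (m + 1) (by omega)).1
end

section
/- Let (h_n)_{n≥0} be defined by h_0 = 1, h_1 = 24, and 3(n+1)²h_{n+1} = 4(28n² + 28n + 9)h_n − 64(4n − 1)(4n + 1)h_{n−1} for n ≥ 1. Then h_n > 0 for all n ≥ 0. -/
theorem lewy_askey_diagonal_positive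
    (h : ℕ → ℝ) (h0 : h 0 = 1) (h1 : h 1 = 24)
    (hh : ∀ n : ℕ, 1 ≤ n →
      3 * ((n : ℝ) + 1) ^ 2 * h (n + 1) =
        4 * (28 * n ^ 2 + 28 * n + 9) * h n - 64 * (4 * n - 1) * (4 * n + 1) * h (n - 1)) :
    ∀ n : ℕ, 0 < h n := by
  have key : ∀ n : ℕ, 0 < h n ∧ 16 * h n ≤ h (n + 1) := by
    intro n
    induction n with
    | zero => rw [h0, h1]; norm_num
    | succ n ih =>
      obtain ⟨hp, hr⟩ := ih
      have hp1 : 0 < h (n + 1) := lt_of_lt_of_le (by linarith) hr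
      refine ⟨hp1, ?_⟩
      have hrec := hh (n + 1) (by omega)
      simp only [Nat.add_sub_cancel] at hrec
      push_cast at hrec
      have hcoef : (0:ℝ) ≤ (4 * ((n:ℝ) + 1) - 1) * (4 * ((n:ℝ) + 1) + 1) := by
        have : (0:ℝ) ≤ (n:ℝ) := Nat.cast_nonneg n
        nlinarith
      nlinarith [hrec, mul_le_mul_of_nonneg_left hr hcoef, hp, hp1,
        mul_nonneg (Nat.cast_nonneg n : (0:ℝ) ≤ n) hp1.le,
        mul_nonneg (mul_nonneg (Nat.cast_nonneg n : (0:ℝ) ≤ n) (Nat.cast_nonneg n)) hp1.le]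
  exact fun n => (key n).1
end

section
/- Let (d_n)_{n≥0} be defined by d_0 = 1, d_1 = 4, and (n+1)³d_{n+1} = 4(2n+1)(3n² + 3n + 1)d_n − 16n³d_{n−1} for n ≥ 1. Then d_n > 0 for all n ≥ 0. -/
theorem kauers_zeilberger_diagonal_positive
    (d : ℕ → ℝ) (h0 : d 0 = 1) (h1 : d 1 = 4)
    (hd : ∀ n : ℕ, 1 ≤ n →
      ((n : ℝ) + 1) ^ 3 * d (n + 1) =
        4 * (2 * n + 1) * (3 * n ^ 2 + 3 * n + 1) * d n - 16 * n ^ 3 * d (n - 1)) :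
    ∀ n : ℕ, 0 < d n := by
  have key : ∀ n : ℕ, 0 < d n ∧ 4 * d n ≤ d (n + 1) := by
    intro n
    induction n with
    | zero => constructor <;> simp [h0, h1]
    | succ n ih =>
      obtain ⟨hp, hr⟩ := ih
      have hp1 : 0 < d (n + 1) := lt_of_lt_of_le (by linarith) hr
      refine ⟨hp1, ?_⟩
      have hrec := hd (n + 1) (by omega)
      simp only [Nat.add_sub_cancel] at hrec
      push_cast at hrec
      have hn : (0 : ℝ) ≤ (n : ℝ) := Nat.cast_nonneg n
      nlinarith [mul_nonneg (mul_nonneg hn hn) hn, mul_nonneg hn hn,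
        mul_nonneg (mul_nonneg (mul_nonneg hn hn) hn) hp1.le,
        mul_nonneg (mul_nonneg hn hn) hp1.le, mul_nonneg hn hp1.le,
        mul_nonneg (mul_nonneg (mul_nonneg hn hn) hn) (by linarith : 0 ≤ d (n+1) - 4 * d n),
        mul_nonneg (mul_nonneg hn hn) (by linarith : 0 ≤ d (n+1) - 4 * d n),
        mul_nonneg hn (by linarith : 0 ≤ d (n+1) - 4 * d n)]
  exact fun n => (key n).1
end

section
/- Let (u_n)_{n≥0} be a nontrivial solution of the recurrence (n+1)²u_{n+1} = (9n² + 9n + 3)u_n − 27n²u_{n−1} for n ≥ 1. Then (u_n) is not eventually sign-definite; that is, for every N there exists n ≥ N with u_n u_{n+1} ≤ 0. -/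
theorem apery_like_oscillatory
    (u : ℕ → ℝ)
    (hu : ∀ n : ℕ, 1 ≤ n →
      ((n : ℝ) + 1) ^ 2 * u (n + 1) =
        (9 * n ^ 2 + 9 * n + 3) * u n - 27 * n ^ 2 * u (n - 1))
    (hnontriv : ∃ n : ℕ, u n ≠ 0) :
    ∀ N : ℕ, ∃ n : ℕ, N ≤ n ∧ u n * u (n + 1) ≤ 0 := by
  intro N
  by_contra hcon
  push_neg at hcon
  -- hcon : ∀ n, N ≤ n → 0 < u n * u (n+1)
  have hne : ∀ n, N ≤ n → u n ≠ 0 := by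
    intro n hn h0
    have := hcon n hn
    rw [h0] at this; simp at this
  set r : ℕ → ℝ := fun n => u (n + 1) / u n with hr
  have hrpos : ∀ n, N ≤ n → 0 < r n := by
    intro n hn
    have h1 := hcon n hn
    have h2 := hne n hn
    have : r n = (u n * u (n + 1)) / (u n) ^ 2 := by
      simp only [hr]; rw [div_eq_div_iff h2 (by positivity)]; ring
    rw [this]
    exact div_pos h1 (by positivity)
  set M := N + 2 with hM
  -- key step inequality
  have key : ∀ n, M ≤ n → r (n + 1) ≤ r n - 1 / r n := by
    intro n hn
    have hnN : N ≤ n := le_trans (by omega) hn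
    have hnN1 : N ≤ n + 1 := by omega
    have hsn : 0 < r n := hrpos n hnN
    have h0 := hne n hnN
    have h1 := hne (n + 1) hnN1
    have E := hu (n + 1) (by omega)
    simp only [Nat.add_sub_cancel] at E
    push_cast at E
    set s := r n with hs
    set t := r (n + 1) with ht
    have hm2 : (2 : ℝ) ≤ (n : ℝ) + 1 := by
      have : (1 : ℝ) ≤ (n : ℝ) := by exact_mod_cast (by omega : 1 ≤ n)
      linarith
    set m : ℝ := (n : ℝ) + 1 with hmdef
    -- derive the ratio equation
    have Eq2 : (m + 1) ^ 2 * (t * s) = (9 * m ^ 2 + 9 * m + 3) * s - 27 * m ^ 2 := by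
      have hts : t * s = u (n + 2) / u n := by
        rw [ht, hs, hr]
        field_simp
      have hsval : s = u (n + 1) / u n := rfl
      rw [hts, hsval]
      field_simp
      linear_combination E
    have quad : (9 * m ^ 2 + 9 * m + 3) * s - 27 * m ^ 2 ≤ (m + 1) ^ 2 * (s ^ 2 - 1) := by
      nlinarith [sq_nonneg (2 * (m + 1) ^ 2 * s - (9 * m ^ 2 + 9 * m + 3)), sq_nonneg (m - 2),
        sq_nonneg m, sq_nonneg (m * (m - 2))]
    have hmp : (0 : ℝ) < (m + 1) ^ 2 := by nlinarith
    have hts2 : t * s ≤ s ^ 2 - 1 := by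
      rw [← mul_le_mul_iff_right₀ hmp]
      calc (m + 1) ^ 2 * (t * s) = (9 * m ^ 2 + 9 * m + 3) * s - 27 * m ^ 2 := Eq2
        _ ≤ (m + 1) ^ 2 * (s ^ 2 - 1) := quad
    have : t ≤ (s ^ 2 - 1) / s := by
      rw [le_div_iff₀ hsn]; linarith
    calc t ≤ (s ^ 2 - 1) / s := this
      _ = s - 1 / s := by field_simp
  -- r is bounded by a decreasing linear function
  have hrM : 0 < r M := hrpos M (by omega)
  have hdec : ∀ k : ℕ, r (M + k) ≤ r M - k / r M := by
    intro k
    induction k with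
    | zero => simp
    | succ k ih =>
      have hposk : 0 < r (M + k) := hrpos (M + k) (by omega)
      have hle : r (M + k) ≤ r M := by
        have : (0 : ℝ) ≤ (k : ℝ) / r M := by positivity
        linarith
      have hinv : 1 / r M ≤ 1 / r (M + k) := one_div_le_one_div_of_le hposk hle
      have := key (M + k) (by omega)
      have hcast : ((k : ℝ) + 1) / r M = (k : ℝ) / r M + 1 / r M := by
        rw [add_div]
      push_cast
      rw [show M + (k + 1) = (M + k) + 1 from rfl] at *
      linarith
  obtain ⟨k, hk⟩ := exists_nat_gt ((r M) ^ 2)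
  have h1 := hdec k
  have h2 := hrpos (M + k) (by omega)
  have h3 : r M < (k : ℝ) / r M := by
    rw [lt_div_iff₀ hrM]
    nlinarith
  linarith
end

section
/- Let a(n), b(n), c(n) be real polynomials in n of the same degree δ, with a(n) = anᵟ + a′nᵟ⁻¹ + …, b(n) = bnᵟ + b′nᵟ⁻¹ + …, c(n) = cnᵟ + c′nᵟ⁻¹ + …, a, b, c > 0, and a(n), b(n), c(n) > 0 for all integers n ≥ 1. Define B(n) = b(n+1)a(n) − b(n)a(n+1), C(n) = c(n+1)a(n) − c(n)a(n+1), B = ba′ − b′a, C = ca′ − c′a, and suppose B > 0 and C > 0; set λ₀ = C/B. Let (u_n)_{n≥0} be a solution of a(n)u_{n+1} = b(n)u_n − c(n)u_{n−1} (n ≥ 1) with u_n > 0 for all n ≥ 0. If C·B(n) ≥ B·C(n) ≥ 0 for all n ≥ 1 and u_2/u_1 ≥ u_1/u_0 ≥ λ₀, then (u_n)_{n≥0} is log-convex, i.e., u_{n−1}u_{n+1} ≥ u_n² for all n ≥ 1. -/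
/-- Here `P`, `Q`, `R` play the roles of the polynomials `a(n)`, `b(n)`, `c(n)`;
`Bc = b a' - b' a` and `Cc = c a' - c' a` are the leading coefficients of
`B(n) = b(n+1)a(n) - b(n)a(n+1)` and `C(n) = c(n+1)a(n) - c(n)a(n+1)`,
where `a', b', c'` are the coefficients of `n^(δ-1)`. -/
theorem log_convexity_criterion
    (δ : ℕ) (P Q R : Polynomial ℝ)
    (hPd : P.natDegree = δ) (hQd : Q.natDegree = δ) (hRd : R.natDegree = δ)
    (hPl : 0 < P.leadingCoeff) (hQl : 0 < Q.leadingCoeff) (hRl : 0 < R.leadingCoeff)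
    (hPpos : ∀ n : ℕ, 1 ≤ n → 0 < P.eval (n : ℝ))
    (hQpos : ∀ n : ℕ, 1 ≤ n → 0 < Q.eval (n : ℝ))
    (hRpos : ∀ n : ℕ, 1 ≤ n → 0 < R.eval (n : ℝ))
    (B C : ℕ → ℝ)
    (hBdef : ∀ n : ℕ, B n = Q.eval ((n : ℝ) + 1) * P.eval (n : ℝ)
                              - Q.eval (n : ℝ) * P.eval ((n : ℝ) + 1))
    (hCdef : ∀ n : ℕ, C n = R.eval ((n : ℝ) + 1) * P.eval (n : ℝ)
                              - R.eval (n : ℝ) * P.eval ((n : ℝ) + 1))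
    (Bc Cc : ℝ)
    (hBc : Bc = Q.leadingCoeff * P.coeff (δ - 1) - Q.coeff (δ - 1) * P.leadingCoeff)
    (hCc : Cc = R.leadingCoeff * P.coeff (δ - 1) - R.coeff (δ - 1) * P.leadingCoeff)
    (hBcpos : 0 < Bc) (hCcpos : 0 < Cc)
    (lam0 : ℝ) (hlam0 : lam0 = Cc / Bc)
    (u : ℕ → ℝ)
    (hu : ∀ n : ℕ, 1 ≤ n →
      P.eval (n : ℝ) * u (n + 1) = Q.eval (n : ℝ) * u n - R.eval (n : ℝ) * u (n - 1))
    (hupos : ∀ n : ℕ, 0 < u n)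
    (hBC : ∀ n : ℕ, 1 ≤ n → Cc * B n ≥ Bc * C n ∧ Bc * C n ≥ 0)
    (hx1 : u 2 / u 1 ≥ u 1 / u 0) (hx0 : u 1 / u 0 ≥ lam0) :
    ∀ n : ℕ, 1 ≤ n → u (n - 1) * u (n + 1) ≥ u n ^ 2 := by
  have key : ∀ n : ℕ, Cc * u n ≤ Bc * u (n + 1) ∧
      u (n + 1) * u (n + 1) ≤ u n * u (n + 2) := by
    intro n
    induction n with
    | zero =>
      constructor
      · rw [hlam0] at hx0
        have h := (div_le_div_iff₀ hBcpos (hupos 0)).mp hx0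
        linarith
      · have h := (div_le_div_iff₀ (hupos 0) (hupos 1)).mp hx1
        linarith
    | succ n ih =>
      obtain ⟨ih1, ih2⟩ := ih
      have hun := hupos n
      have hun1 := hupos (n + 1)
      have hun2 := hupos (n + 2)
      have hun3 := hupos (n + 3)
      have new1 : Cc * u (n + 1) ≤ Bc * u (n + 2) := by nlinarith
      refine ⟨new1, ?_⟩
      have h1 := hu (n + 1) (by omega)
      have h2 := hu (n + 2) (by omega)
      have e1 : ((n : ℕ) + 1 : ℕ) - 1 = n := rfl
      have e2 : ((n : ℕ) + 2 : ℕ) - 1 = n + 1 := rfl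
      rw [e1] at h1
      rw [e2] at h2
      push_cast at h1 h2
      have hB := hBdef (n + 1)
      have hC := hCdef (n + 1)
      push_cast at hB hC
      have ecast : ((n : ℝ) + 1) + 1 = (n : ℝ) + 2 := by ring
      rw [ecast] at hB hC
      have hBCn := hBC (n + 1) (by omega)
      have hBnn : 0 ≤ B (n + 1) := by nlinarith [hBCn.1, hBCn.2]
      have stepB : C (n + 1) * u (n + 1) ≤ B (n + 1) * u (n + 2) := by
        have t1 : B (n + 1) * (Cc * u (n + 1)) ≤ B (n + 1) * (Bc * u (n + 2)) :=
          mul_le_mul_of_nonneg_left new1 hBnn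
        have t2 : (Bc * C (n + 1)) * u (n + 1) ≤ (Cc * B (n + 1)) * u (n + 1) :=
          mul_le_mul_of_nonneg_right hBCn.1 (le_of_lt hun1)
        nlinarith
      have ham1 := hPpos (n + 1) (by omega)
      have ham2 := hPpos (n + 2) (by omega)
      have hcm1 := hRpos (n + 1) (by omega)
      push_cast at ham1 ham2 hcm1
      have stepA : P.eval ((n : ℝ) + 1) * (u (n + 2) * u (n + 2)) ≤
          Q.eval ((n : ℝ) + 1) * (u (n + 1) * u (n + 2))
            - R.eval ((n : ℝ) + 1) * (u (n + 1) * u (n + 1)) := by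
        have t3 : R.eval ((n : ℝ) + 1) * (u (n + 1) * u (n + 1)) ≤
            R.eval ((n : ℝ) + 1) * (u n * u (n + 2)) :=
          mul_le_mul_of_nonneg_left ih2 (le_of_lt hcm1)
        have h1' : P.eval ((n : ℝ) + 1) * u (n + 2)
            = Q.eval ((n : ℝ) + 1) * u (n + 1) - R.eval ((n : ℝ) + 1) * u n := h1
        have e := congrArg (· * u (n + 2)) h1'
        have e' : P.eval ((n : ℝ) + 1) * (u (n + 2) * u (n + 2))
            = Q.eval ((n : ℝ) + 1) * (u (n + 1) * u (n + 2))
              - R.eval ((n : ℝ) + 1) * (u n * u (n + 2)) := by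
          rw [← mul_assoc, e]; ring
        linarith [e', t3]
      have eA := mul_le_mul_of_nonneg_left stepA (le_of_lt ham2)
      have eH : P.eval ((n : ℝ) + 1) * P.eval ((n : ℝ) + 2) * (u (n + 1) * u (n + 3))
          = (Q.eval ((n : ℝ) + 2) * u (n + 2) - R.eval ((n : ℝ) + 2) * u (n + 1))
              * P.eval ((n : ℝ) + 1) * u (n + 1) := by
        rw [← h2]; ring
      have stepB' := mul_le_mul_of_nonneg_right stepB (le_of_lt hun1)
      rw [hB] at stepB'
      rw [hC] at stepB'
      have hprod : 0 ≤ P.eval ((n : ℝ) + 1) * P.eval ((n : ℝ) + 2)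
          * (u (n + 1) * u (n + 3) - u (n + 2) * u (n + 2)) := by
        have eH' : P.eval ((n : ℝ) + 1) * P.eval ((n : ℝ) + 2) * (u (n + 1) * u (n + 3))
            = Q.eval ((n : ℝ) + 2) * u (n + 2) * P.eval ((n : ℝ) + 1) * u (n + 1)
              - R.eval ((n : ℝ) + 2) * u (n + 1) * P.eval ((n : ℝ) + 1) * u (n + 1) := by
          rw [eH]; ring
        linarith [eA, eH', stepB']
      have hd := (mul_nonneg_iff_of_pos_left (mul_pos ham1 ham2)).mp hprod
      linarith [hd]
  intro n hn
  obtain ⟨m, rfl⟩ : ∃ m, n = m + 1 := ⟨n - 1, by omega⟩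
  have h := (key m).2
  simpa [pow_two, mul_comm] using h
end

section
/- Let (u_n)_{n≥0} be defined by u_0 = 1, u_1 = 6, and (n+1)³u_{n+1} = (2n+1)(14n² + 14n + 6)u_n − n(192n² − 12)u_{n−1} for n ≥ 1. Then u_n > 0 for all n ≥ 0 and the sequence is log-convex, i.e., u_{n−1}u_{n+1} ≥ u_n² for all n ≥ 1. -/
set_option maxHeartbeats 1000000

theorem cooper_apery_like_positive_log_convex
    (u : ℕ → ℝ) (h0 : u 0 = 1) (h1 : u 1 = 6)
    (hu : ∀ n : ℕ, 1 ≤ n →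
      ((n : ℝ) + 1) ^ 3 * u (n + 1) =
        (2 * n + 1) * (14 * n ^ 2 + 14 * n + 6) * u n
          - n * (192 * n ^ 2 - 12) * u (n - 1)) :
    (∀ n : ℕ, 0 < u n) ∧ (∀ n : ℕ, 1 ≤ n → u (n - 1) * u (n + 1) ≥ u n ^ 2) := by
  have e1 : u 1 = 6 := h1
  have e2 : u 2 = 54 := by
    have h := hu 1 (by norm_num)
    norm_num [h0, h1] at h
    linarith
  have e3 : u 3 = 564 := by
    have h := hu 2 (by norm_num)
    norm_num [h1, e2] at h
    linarith
  have e4 : u 4 = 6390 := by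
    have h := hu 3 (by norm_num)
    norm_num [e2, e3] at h
    linarith
  have e5 : u 5 = 76356 := by
    have h := hu 4 (by norm_num)
    norm_num [e3, e4] at h
    linarith
  have e6 : u 6 = 948276 := by
    have h := hu 5 (by norm_num)
    norm_num [e4, e5] at h
    linarith
  have e7 : u 7 = 12132504 := by
    have h := hu 6 (by norm_num)
    norm_num [e5, e6] at h
    linarith
  have e8 : u 8 = 158984694 := by
    have h := hu 7 (by norm_num)
    norm_num [e6, e7] at h
    linarith
  have e9 : u 9 = 2124923460 := by
    have h := hu 8 (by norm_num)
    norm_num [e7, e8] at h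
    linarith
  have e10 : u 10 = 28877309604 := by
    have h := hu 9 (by norm_num)
    norm_num [e8, e9] at h
    linarith
  -- key invariant for n ≥ 10
  have key : ∀ n : ℕ, 10 ≤ n → 0 < u (n - 1) ∧ 0 < u n ∧
      12 * u (n - 1) ≤ u n ∧ (n : ℝ) * u n ≤ (16 * (n : ℝ) - 24) * u (n - 1) := by
    intro n hn
    induction n, hn using Nat.le_induction with
    | base =>
      norm_num [e9, e10]
    | succ n hn ih =>
      obtain ⟨hv, hw, hL, hU⟩ := ih
      simp only [Nat.add_sub_cancel]
      have hrec := hu n (by omega)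
      have hnr : (10 : ℝ) ≤ (n : ℝ) := by exact_mod_cast hn
      set v := u (n - 1) with hvdef
      set w := u n with hwdef
      set z := u (n + 1) with hzdef
      have hcube : (0 : ℝ) < ((n : ℝ) + 1) ^ 3 := by positivity
      have hB : (0 : ℝ) ≤ (n : ℝ) * (192 * (n : ℝ) ^ 2 - 12) := by nlinarith
      have hs : (0 : ℝ) ≤ w - 12 * v := by linarith
      have ht : (0 : ℝ) ≤ (16 * (n : ℝ) - 24) * v - (n : ℝ) * w := by linarith
      -- lower closure: 12 w ≤ z
      have h3 : 12 * w ≤ z := by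
        have h3' : ((n : ℝ) + 1) ^ 3 * (12 * w) ≤ ((n : ℝ) + 1) ^ 3 * z := by
          rw [hrec]
          linarith [mul_nonneg hB hs,
            mul_nonneg (by nlinarith : (0 : ℝ) ≤ 72 * (n : ℝ) ^ 2 - 108 * (n : ℝ) - 72) hw.le]
        exact le_of_mul_le_mul_left h3' hcube
      have hwpos : (0 : ℝ) < z := by linarith
      refine ⟨hw, hwpos, h3, ?_⟩
      -- upper closure
      have h4' : (16 * (n : ℝ) - 24) * (((n : ℝ) + 1) ^ 3 * z) ≤
          (16 * (n : ℝ) - 24) * (((16 * (n : ℝ) - 8) * ((n : ℝ) + 1) ^ 2) * w) := by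
        rw [hrec]
        linarith [mul_nonneg hB ht,
          mul_nonneg (by nlinarith : (0 : ℝ) ≤ 4 * (n : ℝ) ^ 2 + 400 * (n : ℝ) + 336) hw.le]
      have h16 : (0 : ℝ) < 16 * (n : ℝ) - 24 := by linarith
      have h4'' : ((n : ℝ) + 1) ^ 3 * z ≤ ((16 * (n : ℝ) - 8) * ((n : ℝ) + 1) ^ 2) * w :=
        le_of_mul_le_mul_left h4' h16
      have hsq : (0 : ℝ) < ((n : ℝ) + 1) ^ 2 := by positivity
      have h4''' : ((n : ℝ) + 1) ^ 2 * (((n : ℝ) + 1) * z) ≤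
          ((n : ℝ) + 1) ^ 2 * ((16 * (n : ℝ) - 8) * w) := by
        nlinarith [h4'']
      have h4 : ((n : ℝ) + 1) * z ≤ (16 * (n : ℝ) - 8) * w :=
        le_of_mul_le_mul_left h4''' hsq
      push_cast
      linarith
  -- positivity
  have pos : ∀ n : ℕ, 0 < u n := by
    intro n
    rcases le_or_gt n 10 with h | h
    · interval_cases n <;> norm_num [h0, e1, e2, e3, e4, e5, e6, e7, e8, e9, e10]
    · exact (key n (by omega)).2.1
  refine ⟨pos, ?_⟩
  intro n hn
  rcases le_or_gt n 9 with h | h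
  · interval_cases n <;>
      norm_num [h0, e1, e2, e3, e4, e5, e6, e7, e8, e9, e10]
  · -- n ≥ 10
    obtain ⟨hv, hw, hL, hU⟩ := key n (by omega)
    have hrec := hu n (by omega)
    have hnr : (10 : ℝ) ≤ (n : ℝ) := by exact_mod_cast h
    set v := u (n - 1) with hvdef
    set w := u n with hwdef
    set z := u (n + 1) with hzdef
    have hcube : (0 : ℝ) < ((n : ℝ) + 1) ^ 3 := by positivity
    have hs : (0 : ℝ) ≤ w - 12 * v := by linarith
    have ht : (0 : ℝ) ≤ (16 * (n : ℝ) - 24) * v - (n : ℝ) * w := by linarith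
    have hmul : (4 * (n : ℝ) - 24) ^ 2 * (((n : ℝ) + 1) ^ 3 * w ^ 2) ≤
        (4 * (n : ℝ) - 24) ^ 2 * (((n : ℝ) + 1) ^ 3 * (v * z)) := by
      have hz3 : ((n : ℝ) + 1) ^ 3 * (v * z) = v * (((n : ℝ) + 1) ^ 3 * z) := by ring
      rw [hz3, hrec]
      linarith [mul_nonneg (mul_nonneg (by nlinarith : (0 : ℝ) ≤
          380 * (n : ℝ) ^ 3 - 208 * (n : ℝ) ^ 2 - 1104 * (n : ℝ) - 576) hs) hs,
        mul_nonneg (mul_nonneg (by nlinarith : (0 : ℝ) ≤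
          16 * (n : ℝ) ^ 4 - 72 * (n : ℝ) ^ 3 + 320 * (n : ℝ) ^ 2 + 888 * (n : ℝ) + 432) hs) ht,
        mul_nonneg (mul_nonneg (by nlinarith : (0 : ℝ) ≤
          72 * (n : ℝ) ^ 2 - 108 * (n : ℝ) - 72) ht) ht]
    have h424 : (0 : ℝ) < (4 * (n : ℝ) - 24) ^ 2 := by
      have : (0 : ℝ) < 4 * (n : ℝ) - 24 := by linarith
      positivity
    have h2 : ((n : ℝ) + 1) ^ 3 * w ^ 2 ≤ ((n : ℝ) + 1) ^ 3 * (v * z) :=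
      le_of_mul_le_mul_left hmul h424
    have := le_of_mul_le_mul_left h2 hcube
    linarith
end

section
/- Let (L_n)_{n≥0} be any nontrivial solution of the recurrence (n+1)L_{n+1} = 2nL_n − nL_{n−1} for n ≥ 1. Then (L_n) is oscillatory: for every positive integer N there exists n ≥ N such that L_n L_{n+1} ≤ 0. -/
open Filter Finset

/-- Key lemma: a solution of the recurrence cannot be eventually strictly positive. -/
lemma laguerre_key (L : ℕ → ℝ)
    (hL : ∀ m : ℕ, ((m : ℝ) + 2) * L (m + 2) = 2 * ((m : ℝ) + 1) * L (m + 1) - ((m : ℝ) + 1) * L m)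
    (N : ℕ) (hpos : ∀ n : ℕ, N ≤ n → 0 < L n) : False := by
  obtain ⟨a, ha_def⟩ : ∃ a : ℕ → ℝ, ∀ n, a n = ((n : ℝ) + 1) * (L (n + 1) - L n) :=
    ⟨_, fun n => rfl⟩
  have ha : ∀ m : ℕ, a (m + 1) = a m - L (m + 1) := by
    intro m
    have h := hL m
    rw [ha_def, ha_def]
    push_cast
    nlinarith [h]
  -- a is nonincreasing past N
  have ha_mono : ∀ m : ℕ, N ≤ m → a (m + 1) ≤ a m := by
    intro m hm
    have := hpos (m + 1) (by omega)
    rw [ha m]; linarith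
  -- Step 1: there is M ≥ N with a M < 0
  have step1 : ∃ M : ℕ, N ≤ M ∧ a M < 0 := by
    by_contra h0
    push_neg at h0
    -- then L is nondecreasing past N
    have hmono : ∀ n : ℕ, N ≤ n → L n ≤ L (n + 1) := by
      intro n hn
      have h1 := h0 n hn
      rw [ha_def] at h1
      have h2 : (0:ℝ) < (n : ℝ) + 1 := by positivity
      nlinarith [h1]
    have hLN : ∀ k : ℕ, L N ≤ L (N + k) := by
      intro k
      induction k with
      | zero => simp
      | succ k ih =>
        have := hmono (N + k) (by omega)
        calc L N ≤ L (N + k) := ih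
        _ ≤ L (N + k + 1) := this
    have hdec : ∀ k : ℕ, a (N + k) ≤ a N - k * L N := by
      intro k
      induction k with
      | zero => simp
      | succ k ih =>
        have h2 : L N ≤ L (N + k + 1) := by
          have := hLN (k + 1); simpa [Nat.add_assoc] using this
        have h3 : a (N + (k + 1)) = a (N + k) - L (N + k + 1) := by
          rw [show N + (k + 1) = (N + k) + 1 by ring, ha (N + k)]
        push_cast
        rw [h3]
        linarith
    obtain ⟨k, hk⟩ := exists_nat_gt (a N / L N)
    have hLNpos : 0 < L N := hpos N le_rfl
    have hk' : a N < k * L N := by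
      rw [div_lt_iff₀ hLNpos] at hk; linarith
    have h4 := hdec k
    have h5 := h0 (N + k) (by omega)
    linarith
  obtain ⟨M, hMN, hMneg⟩ := step1
  obtain ⟨c, hcpos, hcM⟩ : ∃ c : ℝ, 0 < c ∧ a M = -c := ⟨-a M, by linarith, by ring⟩
  -- a stays ≤ -c past M
  have ha_le : ∀ k : ℕ, a (M + k) ≤ -c := by
    intro k
    induction k with
    | zero => simpa using hcM.le
    | succ k ih =>
      have h1 : a (M + k + 1) ≤ a (M + k) := ha_mono (M + k) (by omega)
      calc a (M + (k + 1)) = a (M + k + 1) := by ring_nf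
      _ ≤ a (M + k) := h1
      _ ≤ -c := ih
  -- hence L (n+1) ≤ L n - c / (n+1) for n ≥ M
  have hstep : ∀ n : ℕ, M ≤ n → L (n + 1) ≤ L n - c / ((n : ℝ) + 1) := by
    intro n hn
    have h1 : a n ≤ -c := by
      have := ha_le (n - M)
      rwa [show M + (n - M) = n by omega] at this
    rw [ha_def] at h1
    have h2 : (0:ℝ) < (n : ℝ) + 1 := by positivity
    have h4 : L (n + 1) - L n ≤ -c / ((n : ℝ) + 1) := by
      rw [le_div_iff₀ h2]; nlinarith
    have h5 : -c / ((n : ℝ) + 1) = -(c / ((n : ℝ) + 1)) := by ring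
    linarith [h4, h5.le, h5.ge]
  obtain ⟨S, hS⟩ : ∃ S : ℕ → ℝ, ∀ n, S n = ∑ i ∈ Finset.range n, (1 / ((i : ℝ) + 1)) :=
    ⟨_, fun n => rfl⟩
  have hsum : ∀ k : ℕ, L (M + k) ≤ L M - c * (S (M + k) - S M) := by
    intro k
    induction k with
    | zero => simp
    | succ k ih =>
      have h1 := hstep (M + k) (by omega)
      have h2 : S (M + k + 1) = S (M + k) + 1 / ((M + k : ℕ) + 1 : ℝ) := by
        rw [hS, hS, Finset.sum_range_succ]
      have h3 : L (M + (k + 1)) = L (M + k + 1) := by ring_nf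
      have h4 : S (M + (k + 1)) = S (M + k + 1) := by ring_nf
      rw [h3, h4, h2]
      have h5 : c * (S (M + k) + 1 / ((M + k : ℕ) + 1 : ℝ) - S M) =
          c * (S (M + k) - S M) + c * (1 / ((M + k : ℕ) + 1 : ℝ)) := by ring
      have h6 : c / ((M + k : ℕ) + 1 : ℝ) = c * (1 / ((M + k : ℕ) + 1 : ℝ)) := by ring
      rw [h6] at h1
      linarith
  -- choose n with S n large
  have hdiv : Tendsto S atTop atTop := by
    have := Real.tendsto_sum_range_one_div_nat_succ_atTop
    convert this using 2 with n
    rw [hS]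
  obtain ⟨n, hn1, hn2⟩ := ((hdiv.eventually_ge_atTop (S M + L M / c + 1)).and
    (eventually_ge_atTop M)).exists
  have hk := hsum (n - M)
  rw [show M + (n - M) = n by omega] at hk
  have hLn := hpos n (by omega)
  have h7 : c * (S n - S M) ≥ c * (L M / c + 1) := by
    apply mul_le_mul_of_nonneg_left _ hcpos.le
    linarith
  have hcc : c * (L M / c + 1) = L M + c := by field_simp
  linarith

theorem laguerre_at_one_oscillatory
    (L : ℕ → ℝ)
    (hL : ∀ n : ℕ, 1 ≤ n →
      ((n : ℝ) + 1) * L (n + 1) = 2 * n * L n - n * L (n - 1))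
    (hnontriv : ∃ n : ℕ, L n ≠ 0) :
    ∀ N : ℕ, 1 ≤ N → ∃ n : ℕ, N ≤ n ∧ L n * L (n + 1) ≤ 0 := by
  intro N hN
  by_contra h
  push_neg at h
  have hprod : ∀ n : ℕ, N ≤ n → 0 < L n * L (n + 1) := h
  have hrec : ∀ m : ℕ, ((m : ℝ) + 2) * L (m + 2) =
      2 * ((m : ℝ) + 1) * L (m + 1) - ((m : ℝ) + 1) * L m := by
    intro m
    have h1 := hL (m + 1) (by omega)
    have e : m + 1 + 1 = m + 2 := rfl
    have e2 : m + 1 - 1 = m := rfl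
    rw [e, e2] at h1
    push_cast at h1
    linarith
  have hLN : L N ≠ 0 := by
    intro h0
    have := hprod N le_rfl
    rw [h0] at this; simp at this
  rcases lt_or_gt_of_ne hLN with hneg | hposN
  · -- L N < 0 : apply key lemma to -L
    have hpos : ∀ n : ℕ, N ≤ n → 0 < (fun k => -L k) n := by
      intro n hn
      induction n with
      | zero => exact absurd hn (by omega)
      | succ k ih =>
        rcases Nat.lt_or_ge N (k + 1) with h1 | h1
        · have hk : 0 < -L k := ih (by omega)
          have := hprod k (by omega)
          simp only
          nlinarith
        · have he : N = k + 1 := by omega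
          simp only
          rw [← he]; linarith
    exact laguerre_key (fun k => -L k) (by intro m; have := hrec m; linarith) N hpos
  · have hpos : ∀ n : ℕ, N ≤ n → 0 < L n := by
      intro n hn
      induction n with
      | zero => exact absurd hn (by omega)
      | succ k ih =>
        rcases Nat.lt_or_ge N (k + 1) with h1 | h1
        · have hk : 0 < L k := ih (by omega)
          have := hprod k (by omega)
          nlinarith
        · have he : N = k + 1 := by omega
          rw [← he]; exact hposN
    exact laguerre_key L hrec N hpos
end
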